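/- arXiv:2605.28408 — 10 statements merged into one kernel-verified Lean document; each statement's English description precedes it below -/
import Mathlib

section
/- For every m ≥ 1 and every set A ⊆ ℕ^m, A is definable (without parameters) by a first-order L_BA-formula in the standard L_BA-structure on ℕ if and only if the language [A]_k ⊆ ((Fin k)^m)^* of base-k expansions of elements of A is regular. -/
open FirstOrder FirstOrder.Language

/-- Function symbols of the language of Büchi arithmetic: `0`, `S`, `V`, `+`. -/
inductive LBAFunc : ℕ → Type
  | zero : LBAFunc 0
  | succ : LBAFunc 1
  | vee : LBAFunc 1
  | add : LBAFunc 2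

/-- Relation symbols of the language of Büchi arithmetic: `≤`. -/
inductive LBARel : ℕ → Type
  | le : LBARel 2

/-- The language of Büchi arithmetic: `0`, `S`, `V`, `+`, `≤`. -/
def LBA : FirstOrder.Language := ⟨LBAFunc, LBARel⟩

/-- `V_k(x)`: the largest power of `k` dividing `x` (with `V_k(0) = 0`). -/
def Vk (k x : ℕ) : ℕ :=
  if x = 0 then 0 else k ^ Nat.findGreatest (fun n => k ^ n ∣ x) x

/-- The standard `L_BA`-structure on `ℕ`, with `V` interpreted as `V_k`. -/
def stdStructure (k : ℕ) : LBA.Structure ℕ where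
  funMap {n} f := match f with
    | .zero => fun _ => 0
    | .succ => fun v => v 0 + 1
    | .vee => fun v => Vk k (v 0)
    | .add => fun v => v 0 + v 1
  RelMap {n} r := match r with
    | .le => fun v => v 0 ≤ v 1

namespace BB

/-! ### Part A: digit arithmetic -/

def valL (k : ℕ) : List ℕ → ℕ
  | [] => 0
  | c :: l => c + k * valL k l

variable {k : ℕ}

@[simp] theorem valL_nil : valL k [] = 0 := rfl
@[simp] theorem valL_cons {c : ℕ} {l : List ℕ} : valL k (c :: l) = c + k * valL k l := rfl

theorem valL_append (u v : List ℕ) :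
    valL k (u ++ v) = valL k u + k ^ u.length * valL k v := by
  induction u with
  | nil => simp
  | cons c u ih => simp [ih, pow_succ]; ring

theorem sum_eq_valL (l : List ℕ) :
    ∑ i : Fin l.length, l.get i * k ^ (i : ℕ) = valL k l := by
  induction l with
  | nil => simp
  | cons c l ih =>
    show ∑ i : Fin (l.length + 1), (c :: l).get i * k ^ (i : ℕ) = _
    rw [Fin.sum_univ_succ]
    simp only [List.get_cons_succ, Fin.val_succ, pow_succ, Fin.val_zero, pow_zero, mul_one,
      List.get_cons_zero, valL_cons, ← ih, Finset.mul_sum]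
    congr 1
    refine Finset.sum_congr rfl fun i _ => ?_
    have hg : (c :: l).get i.succ = l.get i := rfl
    rw [hg]; ring

theorem valL_lt (hk : 2 ≤ k) {l : List ℕ} (h : ∀ c ∈ l, c < k) :
    valL k l < k ^ l.length := by
  induction l with
  | nil => simpa using Nat.one_pos
  | cons c l ih =>
    have hc := h c (by simp)
    have hl := ih (fun c hc => h c (by simp [hc]))
    have h1 : k * (valL k l + 1) ≤ k * k ^ l.length := Nat.mul_le_mul_left _ hl
    calc valL k (c :: l) = c + k * valL k l := rfl
      _ < k * (valL k l + 1) := by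
          have e : k * (valL k l + 1) = k * valL k l + k := by ring
          omega
      _ ≤ k * k ^ l.length := h1
      _ = k ^ (c :: l).length := by rw [List.length_cons, pow_succ, mul_comm]

theorem valL_eq_zero (hk : 2 ≤ k) {l : List ℕ} :
    valL k l = 0 ↔ ∀ c ∈ l, c = 0 := by
  induction l with
  | nil => simp
  | cons c l ih =>
    simp only [valL_cons, List.mem_cons]
    constructor
    · intro h
      have hc0 : c = 0 ∧ k * valL k l = 0 := by omega
      have hv : valL k l = 0 := by
        rcases Nat.mul_eq_zero.1 hc0.2 with h' | h' <;> omega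
      rintro d (rfl | hd)
      · exact hc0.1
      · exact ih.1 hv d hd
    · intro h
      have hc : c = 0 := h c (Or.inl rfl)
      have hv : valL k l = 0 := ih.2 fun d hd => h d (Or.inr hd)
      simp [hc, hv]

theorem head_mod (hk : 2 ≤ k) {c x : ℕ} (hc : c < k) : (c + k * x) % k = c := by
  simp [Nat.add_mul_mod_self_left, Nat.mod_eq_of_lt hc]

theorem head_div (hk : 2 ≤ k) {c x : ℕ} (hc : c < k) : (c + k * x) / k = x := by
  rw [Nat.add_mul_div_left _ _ (by omega : 0 < k), Nat.div_eq_of_lt hc, Nat.zero_add]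

theorem head_eq (hk : 2 ≤ k) {c d x y : ℕ} (hc : c < k) (hd : d < k) :
    c + k * x = d + k * y ↔ c = d ∧ x = y := by
  constructor
  · intro h
    have h1 : (c + k * x) % k = c := head_mod hk hc
    have h2 : (d + k * y) % k = d := head_mod hk hd
    have hcd : c = d := by rw [← h1, h, h2]
    refine ⟨hcd, ?_⟩
    subst hcd
    have h3 : k * x = k * y := by omega
    exact Nat.eq_of_mul_eq_mul_left (by omega) h3
  · rintro ⟨rfl, rfl⟩; rfl

theorem valL_get (hk : 2 ≤ k) {l : List ℕ} (h : ∀ c ∈ l, c < k) {i : ℕ} (hi : i < l.length) :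
    valL k l / k ^ i % k = l.get ⟨i, hi⟩ := by
  induction l generalizing i with
  | nil => simp at hi
  | cons c l ih =>
    have hc := h c (by simp)
    cases i with
    | zero => simpa using head_mod hk (x := valL k l) hc
    | succ i =>
      have hi' : i < l.length := by simpa using hi
      rw [show (k : ℕ) ^ (i + 1) = k * k ^ i by ring, ← Nat.div_div_eq_div_mul]
      rw [valL_cons, head_div hk hc]
      simpa using ih (fun d hd => h d (by simp [hd])) hi'

def canonL (k : ℕ) : ℕ → ℕ → List ℕ
  | 0, _ => []
  | n + 1, a => a % k :: canonL k n (a / k)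

@[simp] theorem canonL_length (n a : ℕ) : (canonL k n a).length = n := by
  induction n generalizing a with
  | zero => rfl
  | succ n ih => simp [canonL, ih]

theorem canonL_mem (hk : 2 ≤ k) {n a c : ℕ} (hc : c ∈ canonL k n a) : c < k := by
  induction n generalizing a with
  | zero => simp [canonL] at hc
  | succ n ih =>
    simp only [canonL, List.mem_cons] at hc
    rcases hc with rfl | hc
    · exact Nat.mod_lt _ (by omega)
    · exact ih hc

theorem valL_canonL (hk : 2 ≤ k) {n a : ℕ} (h : a < k ^ n) : valL k (canonL k n a) = a := by
  induction n generalizing a with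
  | zero => simp at h; simp [canonL, h]
  | succ n ih =>
    have : a / k < k ^ n := by
      rw [Nat.div_lt_iff_lt_mul (by omega : 0 < k)]
      calc a < k ^ (n + 1) := h
      _ = k ^ n * k := by ring
    simp [canonL, ih this, Nat.mod_add_div]


/-! ### Vk lemmas -/

theorem Vk_zero : Vk k 0 = 0 := by simp [Vk]

theorem Vk_eq_pow {x : ℕ} (hx : x ≠ 0) :
    Vk k x = k ^ Nat.findGreatest (fun n => k ^ n ∣ x) x := by simp [Vk, hx]

theorem findGreatest_pow_dvd (hk : 2 ≤ k) {x : ℕ} (hx : x ≠ 0) :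
    k ^ Nat.findGreatest (fun n => k ^ n ∣ x) x ∣ x := by
  exact Nat.findGreatest_spec (P := fun n => k ^ n ∣ x) (m := 0) (Nat.zero_le x)
    (by simpa using one_dvd x)

theorem findGreatest_pow_succ_not_dvd (hk : 2 ≤ k) {x : ℕ} (hx : x ≠ 0) :
    ¬ k ^ (Nat.findGreatest (fun n => k ^ n ∣ x) x + 1) ∣ x := by
  set e := Nat.findGreatest (fun n => k ^ n ∣ x) x with he
  intro hdvd
  have hxpos : 0 < x := Nat.pos_of_ne_zero hx
  have hle : k ^ (e + 1) ≤ x := Nat.le_of_dvd hxpos hdvd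
  have h1 : e + 1 ≤ x :=
    le_trans (Nat.lt_pow_self (n := e + 1) (by omega : 1 < k)).le hle
  have := Nat.le_findGreatest (P := fun n => k ^ n ∣ x) h1 hdvd
  omega

theorem Vk_dvd (hk : 2 ≤ k) {x : ℕ} (hx : x ≠ 0) : Vk k x ∣ x := by
  rw [Vk_eq_pow hx]; exact findGreatest_pow_dvd hk hx

theorem pow_dvd_iff_le_Vk (hk : 2 ≤ k) {x e : ℕ} (hx : x ≠ 0) :
    k ^ e ∣ x ↔ k ^ e ≤ Vk k x := by
  rw [Vk_eq_pow hx]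
  set e0 := Nat.findGreatest (fun n => k ^ n ∣ x) x with he0
  constructor
  · intro hdvd
    have hxpos : 0 < x := Nat.pos_of_ne_zero hx
    have h1 : e ≤ x :=
      le_trans (Nat.lt_pow_self (n := e) (by omega : 1 < k)).le (Nat.le_of_dvd hxpos hdvd)
    exact Nat.pow_le_pow_right (by omega)
      (Nat.le_findGreatest (P := fun n => k ^ n ∣ x) h1 hdvd)
  · intro hle
    have h1 : e ≤ e0 := (Nat.pow_le_pow_iff_right (by omega : 1 < k)).1 hle
    exact dvd_trans (pow_dvd_pow k h1) (findGreatest_pow_dvd hk hx)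

theorem Vk_pow (hk : 2 ≤ k) (e : ℕ) : Vk k (k ^ e) = k ^ e := by
  have hx : (k : ℕ) ^ e ≠ 0 := by positivity
  refine le_antisymm (Nat.le_of_dvd (Nat.pos_of_ne_zero hx) (Vk_dvd hk hx)) ?_
  exact (pow_dvd_iff_le_Vk hk hx).1 dvd_rfl

theorem Vk_eq_self_iff (hk : 2 ≤ k) {x : ℕ} :
    (x ≠ 0 ∧ Vk k x = x) ↔ ∃ e, x = k ^ e := by
  constructor
  · rintro ⟨hx, hV⟩
    exact ⟨Nat.findGreatest (fun n => k ^ n ∣ x) x, hV.symm.trans (Vk_eq_pow hx)⟩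
  · rintro ⟨e, rfl⟩
    have : (k : ℕ) ^ e ≠ 0 := by positivity
    exact ⟨this, Vk_pow hk e⟩

theorem Vk_of_mod_ne (hk : 2 ≤ k) {x : ℕ} (h : x % k ≠ 0) : Vk k x = 1 := by
  have hx : x ≠ 0 := by intro h0; simp [h0] at h
  rw [Vk_eq_pow hx]
  have : Nat.findGreatest (fun n => k ^ n ∣ x) x = 0 := by
    rw [Nat.findGreatest_eq_zero_iff]
    intro n hn hnx hdvd
    have : k ∣ x := dvd_trans (dvd_pow_self k (by omega)) hdvd
    exact h (Nat.eq_zero_of_dvd_of_lt this (by omega) |> fun _ => (Nat.mod_eq_zero_of_dvd this))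
  simp [this]

theorem Vk_k_mul (hk : 2 ≤ k) (x : ℕ) : Vk k (k * x) = k * Vk k x := by
  rcases eq_or_ne x 0 with rfl | hx
  · simp [Vk_zero]
  have hkx : k * x ≠ 0 := by positivity
  set e := Nat.findGreatest (fun n => k ^ n ∣ x) x with he
  have hdvd : k ^ e ∣ x := findGreatest_pow_dvd hk hx
  have hnd : ¬ k ^ (e + 1) ∣ x := findGreatest_pow_succ_not_dvd hk hx
  have key : Nat.findGreatest (fun n => k ^ n ∣ k * x) (k * x) = e + 1 := by
    have hxpos : 0 < x := Nat.pos_of_ne_zero hx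
    have hle : e + 1 ≤ k * x := by
      have h1 : k ^ e ≤ x := Nat.le_of_dvd hxpos hdvd
      have h2 : e < k ^ e := Nat.lt_pow_self (n := e) (by omega)
      have h3 : x ≤ k * x := Nat.le_mul_of_pos_left x (by omega)
      omega
    have hdvd1 : k ^ (e + 1) ∣ k * x := by
      rw [pow_succ, mul_comm (k ^ e) k]
      exact mul_dvd_mul_left k hdvd
    refine le_antisymm ?_ (Nat.le_findGreatest (P := fun n => k ^ n ∣ k * x) hle hdvd1)
    by_contra hlt
    push_neg at hlt
    have hspec : k ^ Nat.findGreatest (fun n => k ^ n ∣ k * x) (k * x) ∣ k * x :=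
      Nat.findGreatest_spec (P := fun n => k ^ n ∣ k * x) (m := e + 1) hle hdvd1
    have h4 : k ^ (e + 2) ∣ k * x :=
      dvd_trans (pow_dvd_pow k (by omega)) hspec
    have h5 : k ^ (e + 1) ∣ x := by
      have : k * k ^ (e + 1) ∣ k * x := by
        rw [show k * k ^ (e + 1) = k ^ (e + 2) by ring]; exact h4
      exact (mul_dvd_mul_iff_left (by omega : (k:ℕ) ≠ 0)).1 this
    exact hnd h5
  rw [Vk_eq_pow hkx, Vk_eq_pow hx, key, ← he, pow_succ, mul_comm]

theorem pow_dvd_iff_Vk (hk : 2 ≤ k) {x e : ℕ} :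
    k ^ e ∣ x ↔ (x = 0 ∨ k ^ e ≤ Vk k x) := by
  rcases eq_or_ne x 0 with rfl | hx
  · simp
  · simp [hx, pow_dvd_iff_le_Vk hk hx]


/-! ### Part B: regular sets of tuples -/

def wval (k : ℕ) {ι : Type} (w : List (ι → Fin k)) : ι → ℕ :=
  fun j => valL k (w.map (fun ℓ => (ℓ j : ℕ)))

@[simp] theorem wval_nil {ι : Type} (j : ι) : wval k ([] : List (ι → Fin k)) j = 0 := rfl

@[simp] theorem wval_cons {ι : Type} (a : ι → Fin k) (w : List (ι → Fin k)) (j : ι) :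
    wval k (a :: w) j = (a j : ℕ) + k * wval k w j := rfl

theorem wval_append {ι : Type} (u v : List (ι → Fin k)) (j : ι) :
    wval k (u ++ v) j = wval k u j + k ^ u.length * wval k v j := by
  simp [wval, valL_append]

theorem sum_eq_wval {ι : Type} (w : List (ι → Fin k)) (j : ι) :
    ∑ i : Fin w.length, (w.get i j : ℕ) * k ^ (i : ℕ) = wval k w j := by
  induction w with
  | nil => simp
  | cons a w ih =>
    show ∑ i : Fin (w.length + 1), ((a :: w).get i j : ℕ) * k ^ (i : ℕ) = _
    rw [Fin.sum_univ_succ]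
    simp only [wval_cons, ← ih, Finset.mul_sum]
    congr 1
    · simp; rfl
    refine Finset.sum_congr rfl fun i _ => ?_
    have hg : (a :: w).get i.succ = w.get i := rfl
    rw [hg]
    simp [pow_succ]
    ring

def Lang (k : ℕ) {ι : Type} (S : Set (ι → ℕ)) : Set (List (ι → Fin k)) :=
  {w | wval k w ∈ S}

theorem mem_Lang {ι : Type} {S : Set (ι → ℕ)} {w : List (ι → Fin k)} :
    w ∈ Lang k S ↔ wval k w ∈ S := Iff.rfl

def Reg (k : ℕ) {ι : Type} (S : Set (ι → ℕ)) : Prop :=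
  ∃ (σ : Type) (_ : Fintype σ) (M : DFA (ι → Fin k) σ), M.accepts = ↑(Lang k S)

theorem dfa_evalFrom_append {α σ : Type*} (M : DFA α σ) (s : σ) (x y : List α) :
    M.evalFrom s (x ++ y) = M.evalFrom (M.evalFrom s x) y := by
  simp [DFA.evalFrom, List.foldl_append]

theorem accepts_iff {α σ : Type*} (M : DFA α σ) {L : Set (List α)}
    (h : M.accepts = ↑L) (w : List α) :
    M.evalFrom M.start w ∈ M.accept ↔ w ∈ L := by
  have := congrArg (fun X : Language α => w ∈ X) h
  change w ∈ M.accepts ↔ w ∈ L; rw [h]; exact Iff.rfl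

theorem Reg.univ {ι : Type} : Reg k (Set.univ : Set (ι → ℕ)) := by
  refine ⟨Unit, inferInstance, ⟨fun s _ => s, (), Set.univ⟩, ?_⟩
  ext w
  simp only [DFA.mem_accepts]
  constructor <;> intro <;> trivial

theorem Reg.compl {ι : Type} {S : Set (ι → ℕ)} (h : Reg k S) : Reg k Sᶜ := by
  obtain ⟨σ, inst, M, hM⟩ := h
  refine ⟨σ, inst, ⟨M.step, M.start, M.acceptᶜ⟩, ?_⟩
  ext w
  have h1 : M.evalFrom M.start w ∈ M.accept ↔ wval k w ∈ S := accepts_iff M hM w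
  show M.evalFrom M.start w ∈ M.acceptᶜ ↔ wval k w ∈ Sᶜ
  simp only [Set.mem_compl_iff]
  exact not_congr h1

theorem Reg.inter {ι : Type} {S T : Set (ι → ℕ)} (hS : Reg k S) (hT : Reg k T) :
    Reg k (S ∩ T) := by
  obtain ⟨σ₁, i₁, M₁, h₁⟩ := hS
  obtain ⟨σ₂, i₂, M₂, h₂⟩ := hT
  refine ⟨σ₁ × σ₂, @instFintypeProd _ _ i₁ i₂,
    ⟨fun s a => (M₁.step s.1 a, M₂.step s.2 a), (M₁.start, M₂.start),
      {s | s.1 ∈ M₁.accept ∧ s.2 ∈ M₂.accept}⟩, ?_⟩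
  have key : ∀ (w : List (ι → Fin k)) (s₁ : σ₁) (s₂ : σ₂),
      (DFA.mk (σ := σ₁ × σ₂) (fun s a => (M₁.step s.1 a, M₂.step s.2 a)) (M₁.start, M₂.start)
        {s | s.1 ∈ M₁.accept ∧ s.2 ∈ M₂.accept}).evalFrom (s₁, s₂) w
        = (M₁.evalFrom s₁ w, M₂.evalFrom s₂ w) := by
    intro w
    induction w with
    | nil => intro s₁ s₂; rfl
    | cons a w ih => intro s₁ s₂; exact ih _ _
  ext w
  have e1 : M₁.evalFrom M₁.start w ∈ M₁.accept ↔ wval k w ∈ S := accepts_iff M₁ h₁ w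
  have e2 : M₂.evalFrom M₂.start w ∈ M₂.accept ↔ wval k w ∈ T := accepts_iff M₂ h₂ w
  show DFA.evalFrom _ (M₁.start, M₂.start) w ∈
      {s : σ₁ × σ₂ | s.1 ∈ M₁.accept ∧ s.2 ∈ M₂.accept} ↔ wval k w ∈ S ∩ T
  rw [key w M₁.start M₂.start]
  simp only [Set.mem_setOf_eq, Set.mem_inter_iff]
  exact and_congr e1 e2

theorem wval_map_comp {ι ι' : Type} (h : ι → ι') (w : List (ι' → Fin k)) (j : ι) :
    wval k (w.map (fun a => a ∘ h)) j = wval k w (h j) := by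
  induction w with
  | nil => rfl
  | cons a w ih => simp [ih]

theorem Reg.reindex {ι ι' : Type} (h : ι → ι') {S : Set (ι → ℕ)} (hS : Reg k S) :
    Reg k {g : ι' → ℕ | g ∘ h ∈ S} := by
  obtain ⟨σ, inst, M, hM⟩ := hS
  refine ⟨σ, inst, ⟨fun s a => M.step s (a ∘ h), M.start, M.accept⟩, ?_⟩
  have key : ∀ (w : List (ι' → Fin k)) (s : σ),
      (DFA.mk (fun s (a : ι' → Fin k) => M.step s (a ∘ h)) M.start M.accept).evalFrom s w
        = M.evalFrom s (w.map (fun a => a ∘ h)) := by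
    intro w
    induction w with
    | nil => intro s; rfl
    | cons a w ih => intro s; exact ih _
  ext w
  have e1 : M.evalFrom M.start (w.map (fun a => a ∘ h)) ∈ M.accept ↔
      wval k (w.map (fun a => a ∘ h)) ∈ S := accepts_iff M hM _
  show DFA.evalFrom _ M.start w ∈ M.accept ↔ (wval k w) ∘ h ∈ S
  rw [key w M.start, e1]
  have hw : wval k (w.map fun a => a ∘ h) = (wval k w) ∘ h := by
    funext j; exact wval_map_comp h w j
  rw [hw]

theorem Reg.union {ι : Type} {S T : Set (ι → ℕ)} (hS : Reg k S) (hT : Reg k T) :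
    Reg k (S ∪ T) := by
  have := (hS.compl.inter hT.compl).compl
  rwa [Set.compl_inter, compl_compl, compl_compl] at this

/-! ### canonical digit words -/

def canonF (k : ℕ) (hk : 0 < k) : ℕ → ℕ → List (Fin k)
  | 0, _ => []
  | n + 1, a => ⟨a % k, Nat.mod_lt a hk⟩ :: canonF k hk n (a / k)

@[simp] theorem canonF_length {hk : 0 < k} (n a : ℕ) : (canonF k hk n a).length = n := by
  induction n generalizing a with
  | zero => rfl
  | succ n ih => simp [canonF, ih]

@[simp] theorem canonF_map {hk : 0 < k} (n a : ℕ) :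
    (canonF k hk n a).map (Fin.val) = canonL k n a := by
  induction n generalizing a with
  | zero => rfl
  | succ n ih =>
    rw [canonF, canonL, List.map_cons]
    exact congrArg (List.cons _) (ih _)

theorem valF_canonF (hk : 2 ≤ k) {n a : ℕ} (h : a < k ^ n) :
    valL k ((canonF k (by omega) n a).map (Fin.val)) = a := by
  rw [canonF_map]; exact valL_canonL hk h

/-! ### projection -/

theorem Reg.proj {ι : Type} (hk : 2 ≤ k) {S : Set ((ι ⊕ Unit) → ℕ)} (h : Reg k S) :
    Reg k {f : ι → ℕ | ∃ y : ℕ, (Sum.elim f fun _ => y) ∈ S} := by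
  classical
  obtain ⟨σ, inst, M, hM⟩ := h
  have hk0 : 0 < k := by omega
  let emb : (ι → Fin k) → Fin k → (ι ⊕ Unit → Fin k) := fun a d => Sum.elim a fun _ => d
  let z : ι → Fin k := fun _ => ⟨0, hk0⟩
  let N : NFA (ι → Fin k) σ :=
    { step := fun s a => {t | ∃ d : Fin k, M.step s (emb a d) = t}
      start := {M.start}
      accept := {s | ∃ u : List (Fin k), M.evalFrom s (u.map (emb z)) ∈ M.accept} }
  refine ⟨Set σ, inferInstance, N.toDFA, ?_⟩
  rw [NFA.toDFA_correct]
  -- the path lemma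
  have L1 : ∀ (w : List (ι → Fin k)) (S₀ : Set σ) (t : σ),
      t ∈ N.evalFrom S₀ w ↔ ∃ s ∈ S₀, ∃ v : List (Fin k), v.length = w.length ∧
        M.evalFrom s (List.zipWith emb w v) = t := by
    intro w
    induction w with
    | nil =>
      intro S₀ t
      show t ∈ S₀ ↔ _
      constructor
      · intro ht; exact ⟨t, ht, [], rfl, rfl⟩
      · rintro ⟨s, hs, v, hv, ht⟩
        rw [List.zipWith_nil_left] at ht
        exact ht ▸ hs
    | cons a w ih =>
      intro S₀ t
      show t ∈ N.evalFrom (N.stepSet S₀ a) w ↔ _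
      rw [ih]
      constructor
      · rintro ⟨s', hs', v, hlen, heval⟩
        rw [NFA.mem_stepSet] at hs'
        obtain ⟨s, hs, d, hd⟩ := hs'
        refine ⟨s, hs, d :: v, by simp [hlen], ?_⟩
        show M.evalFrom (M.step s (emb a d)) (List.zipWith emb w v) = t
        rw [hd]; exact heval
      · rintro ⟨s, hs, v, hlen, heval⟩
        cases v with
        | nil => simp at hlen
        | cons d v =>
          refine ⟨M.step s (emb a d), ?_, v, by simpa using hlen, heval⟩
          rw [NFA.mem_stepSet]
          exact ⟨s, hs, d, rfl⟩
  -- value lemmas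
  have L2 : ∀ (w : List (ι → Fin k)) (v : List (Fin k)), v.length = w.length → ∀ j : ι,
      wval k (List.zipWith emb w v) (Sum.inl j) = wval k w j := by
    intro w
    induction w with
    | nil => intro v _ j; simp
    | cons a w ih =>
      intro v hlen j
      cases v with
      | nil => simp at hlen
      | cons d v =>
        show wval k (emb a d :: List.zipWith emb w v) (Sum.inl j) = _
        rw [wval_cons, wval_cons, ih v (by simpa using hlen) j]
        rfl
  have L3 : ∀ (w : List (ι → Fin k)) (v : List (Fin k)), v.length = w.length →
      wval k (List.zipWith emb w v) (Sum.inr ()) = valL k (v.map (Fin.val)) := by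
    intro w
    induction w with
    | nil =>
      intro v hlen
      cases v with
      | nil => simp
      | cons d v => simp at hlen
    | cons a w ih =>
      intro v hlen
      cases v with
      | nil => simp at hlen
      | cons d v =>
        show wval k (emb a d :: List.zipWith emb w v) (Sum.inr ()) = _
        rw [wval_cons, ih v (by simpa using hlen)]
        rfl
  have L4 : ∀ (u : List (Fin k)) (x : ι ⊕ Unit),
      wval k (u.map (emb z)) x = Sum.elim (fun _ => 0) (fun _ => valL k (u.map (Fin.val))) x := by
    intro u
    induction u with
    | nil => rintro (j | t) <;> simp
    | cons d u ih =>
      rintro (j | t)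
      · show (z j : ℕ) + k * wval k (u.map (emb z)) (Sum.inl j) = 0
        rw [ih (Sum.inl j)]
        simp [z]
      · show (d : ℕ) + k * wval k (u.map (emb z)) (Sum.inr t) = _
        rw [ih (Sum.inr t)]
        simp
  ext w
  rw [NFA.mem_accepts]
  show _ ↔ wval k w ∈ {f : ι → ℕ | ∃ y : ℕ, (Sum.elim f fun _ => y) ∈ S}
  simp only [Set.mem_setOf_eq]
  constructor
  · rintro ⟨t, ⟨u, hu⟩, hpath⟩
    obtain ⟨s, hs, v, hlen, heval⟩ := (L1 w N.start t).1 hpath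
    have hss : s = M.start := hs
    subst hss
    set W := List.zipWith emb w v ++ u.map (emb z) with hW
    have hacc : M.evalFrom M.start W ∈ M.accept := by
      rw [hW, dfa_evalFrom_append, heval]; exact hu
    have hWS : wval k W ∈ S := (accepts_iff M hM W).1 hacc
    refine ⟨wval k W (Sum.inr ()), ?_⟩
    have : Sum.elim (wval k w) (fun _ => wval k W (Sum.inr ())) = wval k W := by
      funext x
      cases x with
      | inl j =>
        show wval k w j = wval k W (Sum.inl j)
        rw [hW, wval_append, L2 w v hlen j, L4 u (Sum.inl j)]
        simp
      | inr t => rfl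
    rw [this]; exact hWS
  · rintro ⟨y, hy⟩
    set n := w.length with hn
    have h1 : y % k ^ n < k ^ n := Nat.mod_lt _ (by positivity)
    have h2 : y / k ^ n < k ^ (y + 1) := by
      calc y / k ^ n ≤ y := Nat.div_le_self _ _
      _ < 2 ^ (y + 1) := by
          have := Nat.lt_two_pow_self (n := y)
          have h2 : (2:ℕ) ^ y < 2 ^ (y + 1) := by
            have : (2:ℕ) ^ y > 0 := by positivity
            calc (2:ℕ) ^ y < 2 ^ y + 2 ^ y := by omega
            _ = 2 ^ (y+1) := by ring
          omega
      _ ≤ k ^ (y + 1) := Nat.pow_le_pow_left (by omega) _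
    set v := canonF k hk0 n (y % k ^ n) with hv
    set u := canonF k hk0 (y + 1) (y / k ^ n) with hu
    have hlen : v.length = w.length := by simp [hv, hn]
    have hvval : valL k (v.map (Fin.val)) = y % k ^ n := by
      rw [hv, canonF_map]; exact valL_canonL hk h1
    have huval : valL k (u.map (Fin.val)) = y / k ^ n := by
      rw [hu, canonF_map]; exact valL_canonL hk h2
    set W := List.zipWith emb w v ++ u.map (emb z) with hW
    have hlenz : (List.zipWith emb w v).length = n := by
      rw [List.length_zipWith, hlen]; simp [hn]
    have hWval : wval k W = Sum.elim (wval k w) (fun _ => y) := by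
      funext x
      cases x with
      | inl j =>
        show wval k W (Sum.inl j) = wval k w j
        rw [hW, wval_append, L2 w v hlen j, L4 u (Sum.inl j)]
        simp
      | inr t =>
        show wval k W (Sum.inr t) = y
        rw [hW, wval_append, L3 w v hlen, L4 u (Sum.inr t), hvval, huval, hlenz]
        simp [Nat.mod_add_div]
    have hacc : M.evalFrom M.start W ∈ M.accept := by
      refine (accepts_iff M hM W).2 ?_
      show wval k W ∈ S
      rw [hWval]; exact hy
    refine ⟨M.evalFrom M.start (List.zipWith emb w v), ⟨u, ?_⟩, ?_⟩
    · rw [← dfa_evalFrom_append]; exact hacc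
    · exact (L1 w N.start _).2 ⟨M.start, rfl, v, hlen, rfl⟩

/-! ### helpers -/

theorem head_zero (hk : 2 ≤ k) {c x : ℕ} : c + k * x = 0 ↔ c = 0 ∧ x = 0 := by
  constructor
  · intro h
    have h1 : c = 0 ∧ k * x = 0 := by omega
    rcases Nat.mul_eq_zero.1 h1.2 with h' | h' <;> [omega; exact ⟨h1.1, h'⟩]
  · rintro ⟨rfl, rfl⟩; simp

theorem head_one (hk : 2 ≤ k) {c x : ℕ} (hc : c < k) : c + k * x = 1 ↔ c = 1 ∧ x = 0 := by
  constructor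
  · intro h
    have h1 : (c + k * x) % k = c := head_mod hk hc
    have h2 : (1 : ℕ) % k = 1 := Nat.mod_eq_of_lt (by omega)
    have hc1 : c = 1 := by rw [h] at h1; omega
    subst hc1
    have : k * x = 0 := by omega
    rcases Nat.mul_eq_zero.1 this with h' | h' <;> [omega; exact ⟨rfl, h'⟩]
  · rintro ⟨rfl, rfl⟩; simp

/-! ### base automata -/

def zeroDFA (k : ℕ) : DFA (Unit → Fin k) Bool where
  step := fun s a => s && decide ((a () : ℕ) = 0)
  start := true
  accept := {s | s = true}

theorem reg_zero (hk : 2 ≤ k) : Reg k {g : Unit → ℕ | g () = 0} := by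
  refine ⟨Bool, inferInstance, zeroDFA k, ?_⟩
  have key : ∀ (w : List (Unit → Fin k)) (s : Bool),
      (zeroDFA k).evalFrom s w ∈ (zeroDFA k).accept ↔ (s = true ∧ wval k w () = 0) := by
    intro w
    induction w with
    | nil => intro s; simp [zeroDFA, DFA.evalFrom, wval]
    | cons a w ih =>
      intro s
      show (zeroDFA k).evalFrom (s && decide ((a () : ℕ) = 0)) w ∈ _ ↔ _
      rw [ih, wval_cons, head_zero hk]
      rcases Bool.eq_false_or_eq_true s with rfl | rfl
      · simp
      · by_cases h : (a () : ℕ) = 0 <;> simp [h]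
  ext w
  show (zeroDFA k).evalFrom (zeroDFA k).start w ∈ (zeroDFA k).accept ↔ wval k w () = 0
  rw [key w (zeroDFA k).start]
  simp [zeroDFA]

inductive OSt | start | seen | dead
  deriving DecidableEq

instance : Fintype OSt where
  elems := {.start, .seen, .dead}
  complete := by intro x; cases x <;> simp

def oneDFA (k : ℕ) : DFA (Unit → Fin k) OSt where
  step := fun s a => match s with
    | .start => if (a () : ℕ) = 1 then .seen else .dead
    | .seen => if (a () : ℕ) = 0 then .seen else .dead
    | .dead => .dead
  start := .start
  accept := {s | s = .seen}

theorem reg_one (hk : 2 ≤ k) : Reg k {g : Unit → ℕ | g () = 1} := by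
  refine ⟨OSt, inferInstance, oneDFA k, ?_⟩
  have key : ∀ (w : List (Unit → Fin k)) (s : OSt),
      (oneDFA k).evalFrom s w ∈ (oneDFA k).accept ↔
        ((s = .start ∧ wval k w () = 1) ∨ (s = .seen ∧ wval k w () = 0)) := by
    intro w
    induction w with
    | nil => intro s; cases s <;> simp [oneDFA, DFA.evalFrom] <;> rfl
    | cons a w ih =>
      intro s
      have ha : (a () : ℕ) < k := (a ()).isLt
      cases s with
      | start =>
        show (oneDFA k).evalFrom (if (a () : ℕ) = 1 then OSt.seen else OSt.dead) w ∈ _ ↔ _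
        by_cases h : (a () : ℕ) = 1
        · rw [if_pos h, ih, wval_cons, head_one hk ha]
          simp [h]
        · rw [if_neg h, ih, wval_cons, head_one hk ha]
          simp [h]
      | seen =>
        show (oneDFA k).evalFrom (if (a () : ℕ) = 0 then OSt.seen else OSt.dead) w ∈ _ ↔ _
        by_cases h : (a () : ℕ) = 0
        · rw [if_pos h, ih, wval_cons, head_zero hk]
          simp [h]
        · rw [if_neg h, ih, wval_cons, head_zero hk]
          simp [h]
      | dead =>
        show (oneDFA k).evalFrom OSt.dead w ∈ _ ↔ _
        rw [ih]
        simp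
  ext w
  show (oneDFA k).evalFrom (oneDFA k).start w ∈ (oneDFA k).accept ↔ wval k w () = 1
  rw [key w (oneDFA k).start]
  simp [oneDFA]

/-! ### addition automaton -/

def addDFA (k : ℕ) (hk : 2 ≤ k) : DFA (Fin 3 → Fin k) (Option (Fin 2)) where
  step := fun s a => match s with
    | none => none
    | some c =>
      if ((a 0 : ℕ) + (a 1 : ℕ) + (c : ℕ)) % k = (a 2 : ℕ)
      then some ⟨((a 0 : ℕ) + (a 1 : ℕ) + (c : ℕ)) / k, by
        have h0 := (a 0).isLt; have h1 := (a 1).isLt; have hc := c.isLt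
        rw [Nat.div_lt_iff_lt_mul (by omega)]; omega⟩
      else none
  start := some ⟨0, by omega⟩
  accept := {s | s = some ⟨0, by omega⟩}

theorem reg_add (hk : 2 ≤ k) : Reg k {g : Fin 3 → ℕ | g 0 + g 1 = g 2} := by
  refine ⟨Option (Fin 2), inferInstance, addDFA k hk, ?_⟩
  have dead : ∀ w : List (Fin 3 → Fin k), (addDFA k hk).evalFrom none w = none := by
    intro w
    induction w with
    | nil => rfl
    | cons a w ih => exact ih
  have key : ∀ (w : List (Fin 3 → Fin k)) (c : Fin 2),
      (addDFA k hk).evalFrom (some c) w ∈ (addDFA k hk).accept ↔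
        wval k w 0 + wval k w 1 + (c : ℕ) = wval k w 2 := by
    intro w
    induction w with
    | nil =>
      intro c
      show some c ∈ {s | s = some (⟨0, by omega⟩ : Fin 2)} ↔ (0 : ℕ) + 0 + (c : ℕ) = 0
      simp only [Set.mem_setOf_eq, Option.some.injEq, Fin.ext_iff, Fin.val_mk]
      constructor <;> intro h <;> omega
    | cons a w ih =>
      intro c
      have ha0 := (a 0).isLt; have ha1 := (a 1).isLt; have ha2 := (a 2).isLt
      have hc := c.isLt
      by_cases h : ((a 0 : ℕ) + (a 1 : ℕ) + (c : ℕ)) % k = (a 2 : ℕ)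
      · show (addDFA k hk).evalFrom (if _ then _ else _) w ∈ _ ↔ _
        rw [if_pos h, ih, wval_cons, wval_cons, wval_cons]
        set t := (a 0 : ℕ) + (a 1 : ℕ) + (c : ℕ) with ht
        have e : k * (t / k) + (a 2 : ℕ) = t := by
          conv_rhs => rw [← Nat.div_add_mod t k]
          rw [h]
        constructor
        · intro hh
          calc (a 0 : ℕ) + k * wval k w 0 + ((a 1 : ℕ) + k * wval k w 1) + (c : ℕ)
              = t + k * (wval k w 0 + wval k w 1) := by rw [ht]; ring
            _ = k * (t / k) + (a 2 : ℕ) + k * (wval k w 0 + wval k w 1) := by rw [e]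
            _ = (a 2 : ℕ) + k * (wval k w 0 + wval k w 1 + t / k) := by ring
            _ = (a 2 : ℕ) + k * wval k w 2 := by rw [hh]
        · intro hh
          have h2 : (a 2 : ℕ) + k * (wval k w 0 + wval k w 1 + t / k)
              = (a 2 : ℕ) + k * wval k w 2 := by
            calc (a 2 : ℕ) + k * (wval k w 0 + wval k w 1 + t / k)
                = k * (t / k) + (a 2 : ℕ) + k * (wval k w 0 + wval k w 1) := by ring
              _ = t + k * (wval k w 0 + wval k w 1) := by rw [e]
              _ = (a 0 : ℕ) + k * wval k w 0 + ((a 1 : ℕ) + k * wval k w 1) + (c : ℕ) := by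
                  rw [ht]; ring
              _ = (a 2 : ℕ) + k * wval k w 2 := hh
          exact Nat.eq_of_mul_eq_mul_left (by omega) (Nat.add_left_cancel h2)
      · show (addDFA k hk).evalFrom (if _ then _ else _) w ∈ _ ↔ _
        rw [if_neg h, dead]
        have hrhs : ¬ (wval k (a :: w) 0 + wval k (a :: w) 1 + (c : ℕ) = wval k (a :: w) 2) := by
          intro hh
          rw [wval_cons, wval_cons, wval_cons] at hh
          set t := (a 0 : ℕ) + (a 1 : ℕ) + (c : ℕ) with ht
          have h2 : t + k * (wval k w 0 + wval k w 1) = (a 2 : ℕ) + k * wval k w 2 := by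
            rw [ht]
            calc (a 0 : ℕ) + (a 1 : ℕ) + (c : ℕ) + k * (wval k w 0 + wval k w 1)
                = (a 0 : ℕ) + k * wval k w 0 + ((a 1 : ℕ) + k * wval k w 1) + (c : ℕ) := by ring
              _ = (a 2 : ℕ) + k * wval k w 2 := hh
          have e1 : (t + k * (wval k w 0 + wval k w 1)) % k = t % k :=
            Nat.add_mul_mod_self_left t k _
          rw [h2, head_mod hk ha2] at e1
          exact h e1.symm
        simp only [hrhs, iff_false]
        intro hmem
        exact absurd (show (none : Option (Fin 2)) = some ⟨0, by omega⟩ from hmem) (by simp)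
  ext w
  show (addDFA k hk).evalFrom (addDFA k hk).start w ∈ (addDFA k hk).accept ↔
      wval k w 0 + wval k w 1 = wval k w 2
  rw [show (addDFA k hk).start = some ⟨0, by omega⟩ from rfl, key w _]
  simp

/-! ### V automaton -/

inductive VSt | s0 | s1 | dead
  deriving DecidableEq

instance : Fintype VSt where
  elems := {.s0, .s1, .dead}
  complete := by intro x; cases x <;> simp

def vDFA (k : ℕ) : DFA (Fin 2 → Fin k) VSt where
  step := fun s a => match s with
    | .s0 => if (a 0 : ℕ) = 0 then (if (a 1 : ℕ) = 0 then .s0 else .dead)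
             else (if (a 1 : ℕ) = 1 then .s1 else .dead)
    | .s1 => if (a 1 : ℕ) = 0 then .s1 else .dead
    | .dead => .dead
  start := .s0
  accept := {s | s = .s0 ∨ s = .s1}

theorem reg_V (hk : 2 ≤ k) : Reg k {g : Fin 2 → ℕ | Vk k (g 0) = g 1} := by
  refine ⟨VSt, inferInstance, vDFA k, ?_⟩
  have key : ∀ (w : List (Fin 2 → Fin k)) (s : VSt),
      (vDFA k).evalFrom s w ∈ (vDFA k).accept ↔
        ((s = .s0 ∧ Vk k (wval k w 0) = wval k w 1) ∨ (s = .s1 ∧ wval k w 1 = 0)) := by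
    intro w
    induction w with
    | nil =>
      intro s
      cases s <;> simp [vDFA, DFA.evalFrom, wval, Vk_zero]
    | cons a w ih =>
      intro s
      have ha0 := (a 0).isLt; have ha1 := (a 1).isLt
      cases s with
      | s0 =>
        by_cases h0 : (a 0 : ℕ) = 0
        · by_cases h1 : (a 1 : ℕ) = 0
          · show (vDFA k).evalFrom (if _ then _ else _) w ∈ _ ↔ _
            rw [if_pos h0, if_pos h1, ih, wval_cons, wval_cons, h0, h1]
            simp only [zero_add, Vk_k_mul hk]
            rw [mul_right_inj' (by omega : (k : ℕ) ≠ 0)]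
            simp
          · show (vDFA k).evalFrom (if _ then _ else _) w ∈ _ ↔ _
            rw [if_pos h0, if_neg h1, ih, wval_cons, wval_cons, h0]
            simp only [zero_add, Vk_k_mul hk]
            have hno : ¬ (k * Vk k (wval k w 0) = (a 1 : ℕ) + k * wval k w 1) := by
              intro hh
              have e1 : (0 + k * Vk k (wval k w 0)) % k = 0 := head_mod hk (by omega)
              rw [zero_add] at e1
              rw [hh, head_mod hk ha1] at e1
              exact h1 e1
            simp [hno]
        · by_cases h1 : (a 1 : ℕ) = 1
          · show (vDFA k).evalFrom (if _ then _ else _) w ∈ _ ↔ _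
            rw [if_neg h0, if_pos h1, ih, wval_cons, wval_cons, h1]
            have hV : Vk k ((a 0 : ℕ) + k * wval k w 0) = 1 := by
              apply Vk_of_mod_ne hk
              rw [head_mod hk ha0]
              exact h0
            rw [hV]
            have : (1 = 1 + k * wval k w 1) ↔ wval k w 1 = 0 := by
              constructor
              · intro hh
                have : k * wval k w 1 = 0 := by omega
                rcases Nat.mul_eq_zero.1 this with h' | h' <;> [omega; exact h']
              · intro hh; rw [hh]; simp
            rw [this]
            simp
          · show (vDFA k).evalFrom (if _ then _ else _) w ∈ _ ↔ _
            rw [if_neg h0, if_neg h1, ih, wval_cons, wval_cons]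
            have hV : Vk k ((a 0 : ℕ) + k * wval k w 0) = 1 := by
              apply Vk_of_mod_ne hk
              rw [head_mod hk ha0]
              exact h0
            rw [hV]
            have hno : ¬ ((1 : ℕ) = (a 1 : ℕ) + k * wval k w 1) := by
              intro hh
              have := (head_one hk ha1).1 hh.symm
              exact h1 this.1
            simp [hno]
      | s1 =>
        by_cases h1 : (a 1 : ℕ) = 0
        · show (vDFA k).evalFrom (if _ then _ else _) w ∈ _ ↔ _
          rw [if_pos h1, ih]
          simp only [wval_cons]
          rw [h1]
          rw [show ((0:ℕ) + k * wval k w 1 = 0) ↔ wval k w 1 = 0 from by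
            rw [zero_add]
            constructor
            · intro hh
              rcases Nat.mul_eq_zero.1 hh with h' | h' <;> [omega; exact h']
            · intro hh; rw [hh]; simp]
          simp
        · show (vDFA k).evalFrom (if _ then _ else _) w ∈ _ ↔ _
          rw [if_neg h1, ih]
          simp only [wval_cons]
          have hno : ¬ ((a 1 : ℕ) + k * wval k w 1 = 0) := by
            intro hh
            exact h1 ((head_zero hk).1 hh).1
          simp [hno, h1]
      | dead =>
        show (vDFA k).evalFrom VSt.dead w ∈ _ ↔ _
        rw [ih]
        simp
  ext w
  show (vDFA k).evalFrom (vDFA k).start w ∈ (vDFA k).accept ↔ Vk k (wval k w 0) = wval k w 1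
  rw [show (vDFA k).start = VSt.s0 from rfl, key w _]
  simp

/-! ### derived relations -/

theorem reg_succ (hk : 2 ≤ k) : Reg k {g : Fin 2 → ℕ | g 0 + 1 = g 1} := by
  have X := (reg_one hk).reindex (fun _ : Unit => (Sum.inr () : Fin 2 ⊕ Unit))
  have Y := (reg_add hk).reindex
    (![Sum.inl 0, Sum.inr (), Sum.inl 1] : Fin 3 → Fin 2 ⊕ Unit)
  have P := Reg.proj hk (X.inter Y)
  have hset : {g : Fin 2 → ℕ | g 0 + 1 = g 1} =
      {f : Fin 2 → ℕ | ∃ y : ℕ, (Sum.elim f fun _ => y) ∈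
        ({g : Fin 2 ⊕ Unit → ℕ | g ∘ (fun _ : Unit => (Sum.inr () : Fin 2 ⊕ Unit)) ∈
            {g : Unit → ℕ | g () = 1}} ∩
         {g : Fin 2 ⊕ Unit → ℕ | g ∘ (![Sum.inl 0, Sum.inr (), Sum.inl 1] : Fin 3 → Fin 2 ⊕ Unit) ∈
            {g : Fin 3 → ℕ | g 0 + g 1 = g 2}})} := by
    ext f
    constructor
    · intro h
      exact ⟨1, rfl, h⟩
    · rintro ⟨y, hy, h⟩
      have hy' : y = 1 := hy
      have h' : f 0 + y = f 1 := h
      rw [hy'] at h'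
      exact h'
  rw [hset]
  exact P

theorem reg_le (hk : 2 ≤ k) : Reg k {g : Fin 2 → ℕ | g 0 ≤ g 1} := by
  have Y := (reg_add hk).reindex
    (![Sum.inl 0, Sum.inr (), Sum.inl 1] : Fin 3 → Fin 2 ⊕ Unit)
  have P := Reg.proj hk Y
  have hset : {g : Fin 2 → ℕ | g 0 ≤ g 1} =
      {f : Fin 2 → ℕ | ∃ y : ℕ, (Sum.elim f fun _ => y) ∈
         {g : Fin 2 ⊕ Unit → ℕ | g ∘ (![Sum.inl 0, Sum.inr (), Sum.inl 1] : Fin 3 → Fin 2 ⊕ Unit) ∈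
            {g : Fin 3 → ℕ | g 0 + g 1 = g 2}}} := by
    ext f
    constructor
    · intro h
      have h' : f 0 ≤ f 1 := h
      exact ⟨f 1 - f 0, show f 0 + (f 1 - f 0) = f 1 by omega⟩
    · rintro ⟨y, hy⟩
      have h' : f 0 + y = f 1 := hy
      show f 0 ≤ f 1
      omega
  rw [hset]
  exact P

theorem reg_eq (hk : 2 ≤ k) : Reg k {g : Fin 2 → ℕ | g 0 = g 1} := by
  have h1 := reg_le hk
  have h2 := (reg_le hk).reindex (![1, 0] : Fin 2 → Fin 2)
  have := h1.inter h2
  have hset : {g : Fin 2 → ℕ | g 0 = g 1} =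
      ({g : Fin 2 → ℕ | g 0 ≤ g 1} ∩
       {g : Fin 2 → ℕ | g ∘ (![1, 0] : Fin 2 → Fin 2) ∈ {g : Fin 2 → ℕ | g 0 ≤ g 1}}) := by
    ext f
    constructor
    · intro h
      exact ⟨le_of_eq h, le_of_eq h.symm⟩
    · rintro ⟨ha, hb⟩
      have hb' : f 1 ≤ f 0 := hb
      exact le_antisymm ha hb'
  rw [hset]
  exact this

/-! ### composition lemmas -/

theorem Reg.of_eq {ι : Type} {S T : Set (ι → ℕ)} (h : Reg k S) (hST : T = S) : Reg k T :=
  hST ▸ h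

theorem reg_comp1 (hk : 2 ≤ k) {ι : Type} {G : Set (Fin 2 → ℕ)} (hG : Reg k G)
    {T : (ι → ℕ) → ℕ}
    (hT : Reg k {f : ι ⊕ Unit → ℕ | T (fun i => f (Sum.inl i)) = f (Sum.inr ())}) :
    Reg k {f : ι ⊕ Unit → ℕ | ![T (fun i => f (Sum.inl i)), f (Sum.inr ())] ∈ G} := by
  have A := hT.reindex (fun x : ι ⊕ Unit =>
    match x with
    | .inl i => (Sum.inl (Sum.inl i) : (ι ⊕ Unit) ⊕ Unit)
    | .inr _ => Sum.inr ())
  have C := hG.reindex (![Sum.inr (), Sum.inl (Sum.inr ())] : Fin 2 → (ι ⊕ Unit) ⊕ Unit)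
  have P := Reg.proj hk (A.inter C)
  refine Reg.of_eq P ?_
  ext f
  simp only [Set.mem_setOf_eq, Set.mem_inter_iff]
  have he : ∀ z : ℕ, (Sum.elim f fun _ => z) ∘
      (![Sum.inr (), Sum.inl (Sum.inr ())] : Fin 2 → (ι ⊕ Unit) ⊕ Unit) =
      ![z, f (Sum.inr ())] := by
    intro z
    funext p
    fin_cases p <;> rfl
  constructor
  · intro h
    refine ⟨T (fun i => f (Sum.inl i)), rfl, ?_⟩
    show (Sum.elim f fun _ => T fun i => f (Sum.inl i)) ∘
      (![Sum.inr (), Sum.inl (Sum.inr ())] : Fin 2 → (ι ⊕ Unit) ⊕ Unit) ∈ G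
    rw [he]
    exact h
  · rintro ⟨z, hA, hC⟩
    have hz : T (fun i => f (Sum.inl i)) = z := hA
    subst hz
    rw [he] at hC
    exact hC

theorem reg_comp2 (hk : 2 ≤ k) {ι : Type} {G : Set (Fin 3 → ℕ)} (hG : Reg k G)
    {T₀ T₁ : (ι → ℕ) → ℕ}
    (hT₀ : Reg k {f : ι ⊕ Unit → ℕ | T₀ (fun i => f (Sum.inl i)) = f (Sum.inr ())})
    (hT₁ : Reg k {f : ι ⊕ Unit → ℕ | T₁ (fun i => f (Sum.inl i)) = f (Sum.inr ())}) :
    Reg k {f : ι ⊕ Unit → ℕ |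
      ![T₀ (fun i => f (Sum.inl i)), T₁ (fun i => f (Sum.inl i)), f (Sum.inr ())] ∈ G} := by
  have A0 := hT₀.reindex (fun x : ι ⊕ Unit =>
    match x with
    | .inl i => (Sum.inl (Sum.inl (Sum.inl i)) : ((ι ⊕ Unit) ⊕ Unit) ⊕ Unit)
    | .inr _ => Sum.inl (Sum.inr ()))
  have A1 := hT₁.reindex (fun x : ι ⊕ Unit =>
    match x with
    | .inl i => (Sum.inl (Sum.inl (Sum.inl i)) : ((ι ⊕ Unit) ⊕ Unit) ⊕ Unit)
    | .inr _ => Sum.inr ())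
  have C := hG.reindex (![Sum.inl (Sum.inr ()), Sum.inr (), Sum.inl (Sum.inl (Sum.inr ()))] :
    Fin 3 → ((ι ⊕ Unit) ⊕ Unit) ⊕ Unit)
  have P := Reg.proj hk (Reg.proj hk ((A0.inter A1).inter C))
  refine Reg.of_eq P ?_
  ext f
  simp only [Set.mem_setOf_eq, Set.mem_inter_iff]
  have he : ∀ z0 z1 : ℕ, (Sum.elim (Sum.elim f fun _ => z0) fun _ => z1) ∘
      (![Sum.inl (Sum.inr ()), Sum.inr (), Sum.inl (Sum.inl (Sum.inr ()))] :
        Fin 3 → ((ι ⊕ Unit) ⊕ Unit) ⊕ Unit) =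
      ![z0, z1, f (Sum.inr ())] := by
    intro z0 z1
    funext p
    fin_cases p <;> rfl
  constructor
  · intro h
    refine ⟨T₀ (fun i => f (Sum.inl i)), T₁ (fun i => f (Sum.inl i)), ⟨rfl, rfl⟩, ?_⟩
    show (Sum.elim (Sum.elim f fun _ => T₀ fun i => f (Sum.inl i))
        fun _ => T₁ fun i => f (Sum.inl i)) ∘ _ ∈ G
    rw [he]
    exact h
  · rintro ⟨z0, z1, ⟨hA0, hA1⟩, hC⟩
    have hz0 : T₀ (fun i => f (Sum.inl i)) = z0 := hA0
    have hz1 : T₁ (fun i => f (Sum.inl i)) = z1 := hA1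
    subst hz0
    subst hz1
    rw [he] at hC
    exact hC

theorem reg_rel2 (hk : 2 ≤ k) {ι : Type} {G : Set (Fin 2 → ℕ)} (hG : Reg k G)
    {T₀ T₁ : (ι → ℕ) → ℕ}
    (hT₀ : Reg k {f : ι ⊕ Unit → ℕ | T₀ (fun i => f (Sum.inl i)) = f (Sum.inr ())})
    (hT₁ : Reg k {f : ι ⊕ Unit → ℕ | T₁ (fun i => f (Sum.inl i)) = f (Sum.inr ())}) :
    Reg k {f : ι → ℕ | ![T₀ f, T₁ f] ∈ G} := by
  have A0 := hT₀.reindex (fun x : ι ⊕ Unit =>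
    match x with
    | .inl i => (Sum.inl (Sum.inl i) : (ι ⊕ Unit) ⊕ Unit)
    | .inr _ => Sum.inl (Sum.inr ()))
  have A1 := hT₁.reindex (fun x : ι ⊕ Unit =>
    match x with
    | .inl i => (Sum.inl (Sum.inl i) : (ι ⊕ Unit) ⊕ Unit)
    | .inr _ => Sum.inr ())
  have C := hG.reindex (![Sum.inl (Sum.inr ()), Sum.inr ()] : Fin 2 → (ι ⊕ Unit) ⊕ Unit)
  have P := Reg.proj hk (Reg.proj hk ((A0.inter A1).inter C))
  refine Reg.of_eq P ?_
  ext f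
  simp only [Set.mem_setOf_eq, Set.mem_inter_iff]
  have he : ∀ z0 z1 : ℕ, (Sum.elim (Sum.elim f fun _ => z0) fun _ => z1) ∘
      (![Sum.inl (Sum.inr ()), Sum.inr ()] : Fin 2 → (ι ⊕ Unit) ⊕ Unit) =
      ![z0, z1] := by
    intro z0 z1
    funext p
    fin_cases p <;> rfl
  constructor
  · intro h
    refine ⟨T₀ f, T₁ f, ⟨rfl, rfl⟩, ?_⟩
    show (Sum.elim (Sum.elim f fun _ => T₀ f) fun _ => T₁ f) ∘ _ ∈ G
    rw [he]
    exact h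
  · rintro ⟨z0, z1, ⟨hA0, hA1⟩, hC⟩
    have hz0 : T₀ f = z0 := hA0
    have hz1 : T₁ f = z1 := hA1
    subst hz0
    subst hz1
    rw [he] at hC
    exact hC

/-! ### realization of terms and formulas -/

def treal (k : ℕ) {ι : Type} (t : LBA.Term ι) (v : ι → ℕ) : ℕ :=
  letI := stdStructure k
  t.realize v

def freal (k : ℕ) {ι : Type} {n : ℕ} (φ : LBA.BoundedFormula ι n)
    (v : ι → ℕ) (xs : Fin n → ℕ) : Prop :=
  letI := stdStructure k
  φ.Realize v xs

theorem reg_term (hk : 2 ≤ k) {ι : Type} (t : LBA.Term ι) :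
    Reg k {f : ι ⊕ Unit → ℕ | treal k t (fun i => f (Sum.inl i)) = f (Sum.inr ())} := by
  induction t with
  | var v =>
    refine Reg.of_eq ((reg_eq hk).reindex (![Sum.inl v, Sum.inr ()] : Fin 2 → ι ⊕ Unit)) ?_
    ext f
    exact Iff.rfl
  | func F ts ih =>
    cases F with
    | zero =>
      refine Reg.of_eq ((reg_zero hk).reindex (fun _ : Unit => (Sum.inr () : ι ⊕ Unit))) ?_
      ext f
      show (0 : ℕ) = f (Sum.inr ()) ↔ f (Sum.inr ()) = 0
      exact eq_comm
    | succ =>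
      refine Reg.of_eq (reg_comp1 hk (reg_succ hk) (T := treal k (ts 0)) (ih 0)) ?_
      ext f
      exact Iff.rfl
    | vee =>
      refine Reg.of_eq (reg_comp1 hk (reg_V hk) (T := treal k (ts 0)) (ih 0)) ?_
      ext f
      exact Iff.rfl
    | add =>
      refine Reg.of_eq (reg_comp2 hk (reg_add hk) (T₀ := treal k (ts 0))
        (T₁ := treal k (ts 1)) (ih 0) (ih 1)) ?_
      ext f
      exact Iff.rfl

theorem reg_term' (hk : 2 ≤ k) {ι₁ : Type} {m : ℕ} (t : LBA.Term (ι₁ ⊕ Fin m)) :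
    Reg k {f' : (ι₁ ⊕ Fin m) ⊕ Unit → ℕ |
      (fun g : (ι₁ ⊕ Fin m) → ℕ =>
        treal k t (Sum.elim (fun i => g (Sum.inl i)) (fun j => g (Sum.inr j))))
        (fun i => f' (Sum.inl i)) = f' (Sum.inr ())} := by
  refine Reg.of_eq (reg_term hk t) ?_
  ext f'
  have hv : (Sum.elim (fun a => f' (Sum.inl (Sum.inl a)))
      (fun b => f' (Sum.inl (Sum.inr b)))) = (fun i => f' (Sum.inl i)) := by
    funext x; cases x <;> rfl
  show treal k t (Sum.elim (fun a => f' (Sum.inl (Sum.inl a)))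
      (fun b => f' (Sum.inl (Sum.inr b)))) = f' (Sum.inr ()) ↔
    (treal k t fun i => f' (Sum.inl i)) = f' (Sum.inr ())
  rw [hv]

theorem reg_formula (hk : 2 ≤ k) {ι : Type} {n : ℕ} (φ : LBA.BoundedFormula ι n) :
    Reg k {f : ι ⊕ Fin n → ℕ |
      freal k φ (fun i => f (Sum.inl i)) (fun j => f (Sum.inr j))} := by
  induction φ with
  | falsum =>
    refine Reg.of_eq (Reg.univ.compl) ?_
    ext f
    show False ↔ f ∈ (Set.univ : Set (ι ⊕ Fin _ → ℕ))ᶜ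
    simp
  | @equal m t₁ t₂ =>
    refine Reg.of_eq (reg_rel2 hk (reg_eq hk)
      (T₀ := fun g => treal k t₁ (Sum.elim (fun i => g (Sum.inl i)) (fun j => g (Sum.inr j))))
      (T₁ := fun g => treal k t₂ (Sum.elim (fun i => g (Sum.inl i)) (fun j => g (Sum.inr j))))
      (reg_term' hk t₁) (reg_term' hk t₂)) ?_
    ext f
    exact Iff.rfl
  | @rel m l R ts =>
    cases R with
    | le =>
      refine Reg.of_eq (reg_rel2 hk (reg_le hk)
        (T₀ := fun g => treal k (ts 0) (Sum.elim (fun i => g (Sum.inl i)) (fun j => g (Sum.inr j))))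
        (T₁ := fun g => treal k (ts 1) (Sum.elim (fun i => g (Sum.inl i)) (fun j => g (Sum.inr j))))
        (reg_term' hk (ts 0)) (reg_term' hk (ts 1))) ?_
      ext f
      exact Iff.rfl
  | @imp m φ₁ φ₂ ih₁ ih₂ =>
    refine Reg.of_eq ((ih₁.compl).union ih₂) ?_
    ext f
    simp only [Set.mem_union, Set.mem_compl_iff, Set.mem_setOf_eq]
    show (freal k φ₁ _ _ → freal k φ₂ _ _) ↔ _
    exact imp_iff_not_or
  | @all m φ ih =>
    have S' := ih.reindex (fun x : ι ⊕ Fin (m + 1) =>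
      match x with
      | .inl i => (Sum.inl (Sum.inl i) : (ι ⊕ Fin m) ⊕ Unit)
      | .inr j => Fin.lastCases (Sum.inr ()) (fun j' => Sum.inl (Sum.inr j')) j)
    have P := (Reg.proj hk S'.compl).compl
    refine Reg.of_eq P ?_
    ext f
    simp only [Set.mem_compl_iff, Set.mem_setOf_eq, not_exists, not_not]
    show (∀ y : ℕ, freal k φ (fun i => f (Sum.inl i)) (Fin.snoc (fun j => f (Sum.inr j)) y)) ↔ _
    refine forall_congr' fun y => ?_
    have h2 : (fun j : Fin (m + 1) => Sum.elim f (fun _ : Unit => y)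
        ((fun x : ι ⊕ Fin (m + 1) =>
          match x with
          | .inl i => (Sum.inl (Sum.inl i) : (ι ⊕ Fin m) ⊕ Unit)
          | .inr j => Fin.lastCases (Sum.inr ()) (fun j' => Sum.inl (Sum.inr j')) j)
          (Sum.inr j))) = Fin.snoc (fun j => f (Sum.inr j)) y := by
      funext j
      refine Fin.lastCases ?_ ?_ j
      · rw [Fin.snoc_last]
        show Sum.elim f (fun _ : Unit => y)
          (Fin.lastCases (Sum.inr ()) (fun j' => Sum.inl (Sum.inr j')) (Fin.last m)) = y
        rw [Fin.lastCases_last]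
        rfl
      · intro j'
        rw [Fin.snoc_castSucc]
        show Sum.elim f (fun _ : Unit => y)
          (Fin.lastCases (Sum.inr ()) (fun j' => Sum.inl (Sum.inr j')) (Fin.castSucc j')) =
          f (Sum.inr j')
        rw [Fin.lastCases_castSucc]
        rfl
    exact (iff_of_eq (congrArg (freal k φ fun i => f (Sum.inl i)) h2)).symm

/-! ### Part C: definable sets -/

def Dfb (k : ℕ) {ι : Type} (S : Set (ι → ℕ)) : Prop :=
  ∃ φ : LBA.Formula ι, ∀ a : ι → ℕ, a ∈ S ↔ (letI := stdStructure k; φ.Realize a)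

theorem Dfb.of_eq {ι : Type} {S T : Set (ι → ℕ)} (h : Dfb k S) (hST : T = S) : Dfb k T :=
  hST ▸ h

theorem Dfb.univ {ι : Type} : Dfb k (Set.univ : Set (ι → ℕ)) := by
  refine ⟨⊤, fun a => ?_⟩
  letI := stdStructure k
  simpa using BoundedFormula.realize_top.symm

theorem Dfb.inter {ι : Type} {S T : Set (ι → ℕ)} (hS : Dfb k S) (hT : Dfb k T) :
    Dfb k (S ∩ T) := by
  obtain ⟨φ, hφ⟩ := hS
  obtain ⟨ψ, hψ⟩ := hT
  refine ⟨φ ⊓ ψ, fun a => ?_⟩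
  letI := stdStructure k
  rw [Set.mem_inter_iff, hφ a, hψ a]
  exact BoundedFormula.realize_inf.symm

theorem Dfb.union {ι : Type} {S T : Set (ι → ℕ)} (hS : Dfb k S) (hT : Dfb k T) :
    Dfb k (S ∪ T) := by
  obtain ⟨φ, hφ⟩ := hS
  obtain ⟨ψ, hψ⟩ := hT
  refine ⟨φ ⊔ ψ, fun a => ?_⟩
  letI := stdStructure k
  rw [Set.mem_union, hφ a, hψ a]
  exact BoundedFormula.realize_sup.symm

theorem Dfb.compl {ι : Type} {S : Set (ι → ℕ)} (hS : Dfb k S) : Dfb k Sᶜ := by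
  obtain ⟨φ, hφ⟩ := hS
  refine ⟨φ.not, fun a => ?_⟩
  letI := stdStructure k
  rw [Set.mem_compl_iff, hφ a]
  exact BoundedFormula.realize_not.symm

theorem Dfb_biInter {ι J : Type} (s : Finset J) (S : J → Set (ι → ℕ))
    (h : ∀ j ∈ s, Dfb k (S j)) : Dfb k (⋂ j ∈ s, S j) := by
  classical
  induction s using Finset.induction_on with
  | empty => exact Dfb.univ.of_eq (by simp)
  | insert b t hj ih =>
    refine ((h b (by simp)).inter (ih fun j hjs => h j (by simp [hjs]))).of_eq ?_
    simp [Set.biInter_insert]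

theorem Dfb.iInter {ι J : Type} [Fintype J] {S : J → Set (ι → ℕ)}
    (h : ∀ j, Dfb k (S j)) : Dfb k (⋂ j, S j) := by
  refine (Dfb_biInter Finset.univ S fun j _ => h j).of_eq ?_
  simp

theorem Dfb_biUnion {ι J : Type} (s : Finset J) (S : J → Set (ι → ℕ))
    (h : ∀ j ∈ s, Dfb k (S j)) : Dfb k (⋃ j ∈ s, S j) := by
  classical
  induction s using Finset.induction_on with
  | empty => exact Dfb.univ.compl.of_eq (by simp)
  | insert b t hj ih =>
    refine ((h b (by simp)).union (ih fun j hjs => h j (by simp [hjs]))).of_eq ?_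
    simp [Set.biUnion_insert]

theorem Dfb.iUnion {ι J : Type} [Fintype J] {S : J → Set (ι → ℕ)}
    (h : ∀ j, Dfb k (S j)) : Dfb k (⋃ j, S j) := by
  refine (Dfb_biUnion Finset.univ S fun j _ => h j).of_eq ?_
  simp

theorem Dfb.iexs {ι γ : Type} [Finite γ] {S : Set ((ι ⊕ γ) → ℕ)} (hS : Dfb k S) :
    Dfb k {f : ι → ℕ | ∃ g : γ → ℕ, Sum.elim f g ∈ S} := by
  obtain ⟨φ, hφ⟩ := hS
  refine ⟨φ.iExs, fun a => ?_⟩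
  letI := stdStructure k
  rw [Set.mem_setOf_eq]
  rw [Formula.realize_iExs]
  constructor
  · rintro ⟨g, hg⟩
    exact ⟨g, by rw [← hφ]; exact hg⟩
  · rintro ⟨g, hg⟩
    refine ⟨g, ?_⟩
    rw [hφ]
    exact hg

theorem Dfb.ialls {ι γ : Type} [Finite γ] {S : Set ((ι ⊕ γ) → ℕ)} (hS : Dfb k S) :
    Dfb k {f : ι → ℕ | ∀ g : γ → ℕ, Sum.elim f g ∈ S} := by
  obtain ⟨φ, hφ⟩ := hS
  refine ⟨φ.iAlls, fun a => ?_⟩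
  letI := stdStructure k
  rw [Set.mem_setOf_eq]
  rw [Formula.realize_iAlls]
  constructor
  · intro h g
    rw [← hφ]
    exact h g
  · intro h g
    rw [hφ]
    exact h g

/-! ### term builders -/

def tvar {ι : Type} (i : ι) : LBA.Term ι := Term.var i
def tzero {ι : Type} : LBA.Term ι := Term.func LBAFunc.zero Fin.elim0
def tsucc {ι : Type} (t : LBA.Term ι) : LBA.Term ι := Term.func LBAFunc.succ ![t]
def tV {ι : Type} (t : LBA.Term ι) : LBA.Term ι := Term.func LBAFunc.vee ![t]
def tadd {ι : Type} (t u : LBA.Term ι) : LBA.Term ι := Term.func LBAFunc.add ![t, u]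
def tsmul {ι : Type} : ℕ → LBA.Term ι → LBA.Term ι
  | 0, _ => tzero
  | c + 1, t => tadd (tsmul c t) t

@[simp] theorem treal_tvar {ι : Type} (i : ι) (v : ι → ℕ) : treal k (tvar i) v = v i := rfl
@[simp] theorem treal_tzero {ι : Type} (v : ι → ℕ) : treal k (tzero (ι := ι)) v = 0 := rfl
@[simp] theorem treal_tsucc {ι : Type} (t : LBA.Term ι) (v : ι → ℕ) :
    treal k (tsucc t) v = treal k t v + 1 := rfl
@[simp] theorem treal_tV {ι : Type} (t : LBA.Term ι) (v : ι → ℕ) :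
    treal k (tV t) v = Vk k (treal k t v) := rfl
@[simp] theorem treal_tadd {ι : Type} (t u : LBA.Term ι) (v : ι → ℕ) :
    treal k (tadd t u) v = treal k t v + treal k u v := rfl
@[simp] theorem treal_tsmul {ι : Type} (c : ℕ) (t : LBA.Term ι) (v : ι → ℕ) :
    treal k (tsmul c t) v = c * treal k t v := by
  induction c with
  | zero => simp [tsmul]
  | succ c ih =>
    show treal k (tadd (tsmul c t) t) v = _
    rw [treal_tadd, ih]
    ring

@[simp] theorem treal_def {ι : Type} (t : LBA.Term ι) (v : ι → ℕ) :
    (@Term.realize LBA ℕ (stdStructure k) ι v t) = treal k t v := rfl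

@[simp] theorem relmap_le (x y : ℕ) :
    (Structure.RelMap (M := ℕ) (L := LBA) (self := stdStructure k) LBARel.le ![x, y]) ↔ x ≤ y :=
  Iff.rfl

/-! ### atomic definable sets -/

theorem Dfb_eq {ι : Type} (tx ty : LBA.Term ι) :
    Dfb k {f : ι → ℕ | treal k tx f = treal k ty f} := by
  refine ⟨tx.equal ty, fun a => ?_⟩
  letI := stdStructure k
  rw [Set.mem_setOf_eq]
  exact Formula.realize_equal.symm

theorem Dfb_le (tx ty : LBA.Term ι) :
    Dfb k {f : ι → ℕ | treal k tx f ≤ treal k ty f} := by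
  refine ⟨Relations.formula₂ LBARel.le tx ty, fun a => ?_⟩
  letI := stdStructure k
  rw [Set.mem_setOf_eq]
  refine Iff.trans ?_ (Formula.realize_rel₂ (L := LBA) (M := ℕ) (v := a)
    (R := (LBARel.le : LBA.Relations 2)) (t₁ := tx) (t₂ := ty)).symm
  exact Iff.rfl

/-- digit predicate: the digit of `x` at position `p` (a power of `k`) is `d`. -/
def DigP (k x p d : ℕ) : Prop :=
  ∃ b c : ℕ, x = b + d * p + c ∧ c < p ∧ (b = 0 ∨ k * p ≤ Vk k b)

theorem Dfb_dig (hk : 2 ≤ k) {ι : Type} (tx tp : LBA.Term ι) (d : ℕ) :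
    Dfb k {f : ι → ℕ | DigP k (treal k tx f) (treal k tp f) d} := by
  have h1 := Dfb_eq (k := k) (ι := ι ⊕ Fin 2) (tx.relabel Sum.inl)
    (tadd (tadd (tvar (Sum.inr 0)) (tsmul d (tp.relabel Sum.inl))) (tvar (Sum.inr 1)))
  have h2 := Dfb_le (k := k) (ι := ι ⊕ Fin 2) (tsucc (tvar (Sum.inr 1))) (tp.relabel Sum.inl)
  have h3 := Dfb_eq (k := k) (ι := ι ⊕ Fin 2) (tvar (Sum.inr 0)) tzero
  have h4 := Dfb_le (k := k) (ι := ι ⊕ Fin 2) (tsmul k (tp.relabel Sum.inl)) (tV (tvar (Sum.inr 0)))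
  have H := Dfb.iexs (γ := Fin 2) ((h1.inter h2).inter (h3.union h4))
  refine H.of_eq ?_
  ext f
  simp only [Set.mem_setOf_eq, Set.mem_inter_iff, Set.mem_union, treal_tadd, treal_tsmul,
    treal_tsucc, treal_tvar, treal_tzero, treal_tV]
  have hrel : ∀ (g : Fin 2 → ℕ) (t : LBA.Term ι),
      treal k (t.relabel (Sum.inl : ι → ι ⊕ Fin 2)) (Sum.elim f g) = treal k t f := by
    intro g t
    show (letI := stdStructure k; Term.realize (Sum.elim f g) (t.relabel Sum.inl)) = _
    letI := stdStructure k
    rw [Term.realize_relabel]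
    rfl
  constructor
  · rintro ⟨b, c, hx, hc, hb⟩
    refine ⟨![b, c], ?_, ?_⟩
    · constructor
      · rw [hrel, hrel]
        show treal k tx f = b + d * treal k tp f + c
        omega
      · rw [hrel]
        show c + 1 ≤ treal k tp f
        omega
    · rcases hb with hb | hb
      · left; exact hb
      · right; rw [hrel]; exact hb
  · rintro ⟨g, ⟨hx, hc⟩, hb⟩
    rw [hrel, hrel] at hx
    rw [hrel] at hc
    simp only [Sum.elim_inr] at hx hc
    have hb' : Sum.elim f g (Sum.inr 0) = g 0 := rfl
    rw [hb'] at hb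
    refine ⟨g 0, g 1, by omega, by omega, ?_⟩
    rcases hb with hb | hb
    · left; exact hb
    · right; rw [hrel] at hb; exact hb

/-- `x` is a (positive) power of `k`. -/
def PowP (k x : ℕ) : Prop := x ≠ 0 ∧ Vk k x = x

theorem PowP_iff (hk : 2 ≤ k) {x : ℕ} : PowP k x ↔ ∃ e, x = k ^ e := by
  rw [PowP]
  exact Vk_eq_self_iff hk

theorem Dfb_pow {ι : Type} (tx : LBA.Term ι) :
    Dfb k {f : ι → ℕ | PowP k (treal k tx f)} := by
  have h1 := (Dfb_eq (k := k) (ι := ι) tx tzero).compl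
  have h2 := Dfb_eq (k := k) (ι := ι) (tV tx) tx
  refine (h1.inter h2).of_eq ?_
  ext f
  simp only [Set.mem_setOf_eq, Set.mem_inter_iff, Set.mem_compl_iff, treal_tzero, treal_tV]
  exact Iff.rfl

/-! ### digit arithmetic -/

theorem dig_iff (hk : 2 ≤ k) {x e d : ℕ} (hd : d < k) :
    DigP k x (k ^ e) d ↔ x / k ^ e % k = d := by
  constructor
  · rintro ⟨b, c, hx, hc, hb⟩
    have hbd : k ^ (e + 1) ∣ b := by
      rcases hb with rfl | h
      · exact dvd_zero _
      · have hbne : b ≠ 0 := by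
          rintro rfl
          rw [Vk_zero] at h
          have : 0 < k * k ^ e := by positivity
          omega
        refine (pow_dvd_iff_le_Vk hk hbne).2 ?_
        rw [pow_succ']
        exact h
    obtain ⟨q, rfl⟩ := hbd
    have hx' : x = c + k ^ e * (d + k * q) := by rw [hx]; ring
    rw [hx', Nat.add_mul_div_left _ _ (by positivity : 0 < k ^ e),
      Nat.div_eq_of_lt hc, Nat.zero_add, Nat.add_mul_mod_self_left, Nat.mod_eq_of_lt hd]
  · intro h
    refine ⟨x / k ^ (e + 1) * k ^ (e + 1), x % k ^ e, ?_,
      Nat.mod_lt _ (by positivity), ?_⟩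
    · have h2 : x / k ^ e = k * (x / k ^ (e + 1)) + x / k ^ e % k := by
        conv_lhs => rw [← Nat.div_add_mod (x / k ^ e) k]
        rw [Nat.div_div_eq_div_mul, ← pow_succ]
      calc x = k ^ e * (x / k ^ e) + x % k ^ e := (Nat.div_add_mod _ _).symm
        _ = k ^ e * (k * (x / k ^ (e + 1)) + x / k ^ e % k) + x % k ^ e := by rw [← h2]
        _ = x / k ^ (e + 1) * k ^ (e + 1) + (x / k ^ e % k) * k ^ e + x % k ^ e := by ring
        _ = x / k ^ (e + 1) * k ^ (e + 1) + d * k ^ e + x % k ^ e := by rw [h]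
    · rcases eq_or_ne (x / k ^ (e + 1)) 0 with hq | hq
      · left
        rw [hq, Nat.zero_mul]
      · right
        have hbne : x / k ^ (e + 1) * k ^ (e + 1) ≠ 0 :=
          Nat.mul_ne_zero hq (by positivity)
        have hdvd : k ^ (e + 1) ∣ x / k ^ (e + 1) * k ^ (e + 1) := dvd_mul_left _ _
        have h5 := (pow_dvd_iff_le_Vk hk hbne).1 hdvd
        exact le_trans (le_of_eq (pow_succ' k e).symm) h5

/-! ### canonical words for tuples -/

def canonW (k : ℕ) (hk : 0 < k) {ι : Type} : ℕ → (ι → ℕ) → List (ι → Fin k)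
  | 0, _ => []
  | n + 1, a => (fun j => ⟨a j % k, Nat.mod_lt _ hk⟩) :: canonW k hk n (fun j => a j / k)

@[simp] theorem canonW_length {hk : 0 < k} {ι : Type} (n : ℕ) (a : ι → ℕ) :
    (canonW k hk n a).length = n := by
  induction n generalizing a with
  | zero => rfl
  | succ n ih => simp [canonW, ih]

theorem canonW_map {hk : 0 < k} {ι : Type} (n : ℕ) (a : ι → ℕ) (j : ι) :
    (canonW k hk n a).map (fun ℓ => ((ℓ j : Fin k) : ℕ)) = canonL k n (a j) := by
  induction n generalizing a with
  | zero => rfl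
  | succ n ih =>
    rw [canonW, canonL, List.map_cons]
    exact congrArg (List.cons _) (ih _)

theorem wval_canonW (hk : 2 ≤ k) {hk0 : 0 < k} {ι : Type} {n : ℕ} {a : ι → ℕ} (j : ι)
    (h : a j < k ^ n) : wval k (canonW k hk0 n a) j = a j := by
  show valL k ((canonW k hk0 n a).map fun ℓ => ((ℓ j : Fin k) : ℕ)) = a j
  rw [canonW_map]
  exact valL_canonL hk h

theorem canonW_get {hk0 : 0 < k} {ι : Type} (n : ℕ) (a : ι → ℕ) (i : ℕ) (hi : i < n) :
    (canonW k hk0 n a).get ⟨i, by simpa using hi⟩ =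
      fun j => (⟨a j / k ^ i % k, Nat.mod_lt _ hk0⟩ : Fin k) := by
  induction n generalizing a i with
  | zero => omega
  | succ n ih =>
    cases i with
    | zero =>
      show (fun j => (⟨a j % k, _⟩ : Fin k)) = _
      funext j
      apply Fin.ext
      simp
    | succ i =>
      have hi' : i < n := by omega
      show (canonW k hk0 n (fun j => a j / k)).get ⟨i, by simpa using hi'⟩ = _
      rw [ih (fun j => a j / k) i hi']
      funext j
      apply Fin.ext
      show a j / k / k ^ i % k = a j / k ^ (i + 1) % k
      rw [Nat.div_div_eq_div_mul, ← pow_succ']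

theorem evalFrom_take_succ {α σ : Type*} (M : DFA α σ) :
    ∀ (l : List α) (i : ℕ) (hi : i < l.length) (s : σ),
      M.evalFrom s (l.take (i + 1)) = M.step (M.evalFrom s (l.take i)) (l.get ⟨i, hi⟩) := by
  intro l
  induction l with
  | nil => intro i hi; simp at hi
  | cons x l ih =>
    intro i hi s
    cases i with
    | zero => rfl
    | succ i =>
      have hi' : i < l.length := by simpa using hi
      show M.evalFrom (M.step s x) (l.take (i + 1)) = _
      rw [ih i hi' (M.step s x)]
      rfl

/-! ### the run-encoding condition -/

def Cond (k : ℕ) {m : ℕ} {σ : Type} (M : DFA (Fin m → Fin k) σ)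
    (a : Fin m → ℕ) (X : σ → ℕ) (L : ℕ) : Prop :=
  PowP k L ∧ (∀ j, a j < L) ∧ DigP k (X M.start) 1 1 ∧
  (∀ p, PowP k p → p ≤ L → ∀ s t : σ, s ≠ t → ¬(DigP k (X s) p 1 ∧ DigP k (X t) p 1)) ∧
  (∀ p, PowP k p → k * p ≤ L → ∀ s : σ, ∀ ℓ : Fin m → Fin k,
    DigP k (X s) p 1 → (∀ j, DigP k (a j) p ((ℓ j : ℕ))) →
      DigP k (X (M.step s ℓ)) (k * p) 1) ∧
  (∃ s, s ∈ M.accept ∧ DigP k (X s) L 1)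

theorem cond_iff (hk : 2 ≤ k) (hk0 : 0 < k) {m : ℕ} {σ : Type}
    (M : DFA (Fin m → Fin k) σ) (a : Fin m → ℕ) :
    (∃ (X : σ → ℕ) (L : ℕ), Cond k M a X L) ↔
    ∃ n : ℕ, (∀ j, a j < k ^ n) ∧
      M.evalFrom M.start (canonW k hk0 n a) ∈ M.accept := by
  constructor
  · rintro ⟨X, L, hPow, hbound, hstart, hamo, hstep, s, hsacc, hsdig⟩
    obtain ⟨n, rfl⟩ := (PowP_iff hk).1 hPow
    set w := canonW k hk0 n a with hw
    have hwlen : w.length = n := canonW_length n a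
    have claim : ∀ i, i ≤ n → DigP k (X (M.evalFrom M.start (w.take i))) (k ^ i) 1 := by
      intro i
      induction i with
      | zero =>
        intro _
        rw [pow_zero]
        exact hstart
      | succ i ih =>
        intro hin
        have hi : i < n := by omega
        have hii := ih (by omega)
        have hP : PowP k (k ^ i) := (PowP_iff hk).2 ⟨i, rfl⟩
        have hle : k * k ^ i ≤ k ^ n := by
          rw [← pow_succ']
          exact Nat.pow_le_pow_right (by omega) (by omega)
        have hdigs : ∀ j, DigP k (a j) (k ^ i)
            (((⟨a j / k ^ i % k, Nat.mod_lt _ hk0⟩ : Fin k) : ℕ)) := by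
          intro j
          rw [dig_iff hk (Nat.mod_lt _ (by omega : 0 < k))]
        have h2 := hstep (k ^ i) hP hle _
          (fun j => (⟨a j / k ^ i % k, Nat.mod_lt _ hk0⟩ : Fin k)) hii hdigs
        rw [evalFrom_take_succ M w i (by omega : i < w.length), pow_succ']
        rw [canonW_get n a i hi]
        exact h2
    have hfin := claim n le_rfl
    have hs : s = M.evalFrom M.start (w.take n) := by
      by_contra hne
      exact hamo (k ^ n) hPow le_rfl s _ hne ⟨hsdig, hfin⟩
    have htake : w.take n = w := by
      conv_lhs => rw [← hwlen]
      exact List.take_length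
    refine ⟨n, hbound, ?_⟩
    rw [← hw, ← htake]
    rw [hs] at hsacc
    exact hsacc
  · rintro ⟨n, hbound, hacc⟩
    classical
    set w := canonW k hk0 n a with hw
    have hwlen : w.length = n := canonW_length n a
    set r : ℕ → σ := fun i => M.evalFrom M.start (w.take i) with hr
    set X : σ → ℕ :=
      fun s => valL k ((List.range (n + 1)).map (fun i => if r i = s then 1 else 0)) with hX
    have hdigX : ∀ (i : ℕ), i ≤ n → ∀ s, X s / k ^ i % k = (if r i = s then 1 else 0) := by
      intro i hi s
      have hlt : ∀ c ∈ (List.range (n + 1)).map (fun i => if r i = s then 1 else 0), c < k := by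
        intro c hc
        rcases List.mem_map.1 hc with ⟨i', _, rfl⟩
        split <;> omega
      have hlen : i < ((List.range (n + 1)).map fun i => if r i = s then 1 else 0).length := by
        simp
        omega
      have hvg := valL_get hk hlt (i := i) hlen
      rw [hX]
      rw [hvg, List.get_eq_getElem, List.getElem_map, List.getElem_range]
    have hdig : ∀ i, i ≤ n → ∀ s d, d < k →
        (DigP k (X s) (k ^ i) d ↔ (if r i = s then 1 else 0) = d) := by
      intro i hi s d hd
      rw [dig_iff hk hd, hdigX i hi s]
    have hr0 : r 0 = M.start := rfl
    refine ⟨X, k ^ n, (PowP_iff hk).2 ⟨n, rfl⟩, hbound, ?_, ?_, ?_, ?_⟩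
    · have h0 := (hdig 0 (by omega) M.start 1 (by omega)).2 (by rw [hr0, if_pos rfl])
      rwa [pow_zero] at h0
    · intro p hp hple s t hst hh
      obtain ⟨e, rfl⟩ := (PowP_iff hk).1 hp
      have he : e ≤ n := (Nat.pow_le_pow_iff_right (by omega : 1 < k)).1 hple
      have h1 := (hdig e he s 1 (by omega)).1 hh.1
      have h2 := (hdig e he t 1 (by omega)).1 hh.2
      have hs : r e = s := by
        by_contra hne
        rw [if_neg hne] at h1
        omega
      have ht : r e = t := by
        by_contra hne
        rw [if_neg hne] at h2
        omega
      exact hst (hs ▸ ht)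
    · intro p hp hple s ℓ h1 h2
      obtain ⟨e, rfl⟩ := (PowP_iff hk).1 hp
      have he1 : e + 1 ≤ n := by
        rw [← pow_succ'] at hple
        exact (Nat.pow_le_pow_iff_right (by omega : 1 < k)).1 hple
      have hse : r e = s := by
        have h1' := (hdig e (by omega) s 1 (by omega)).1 h1
        by_contra hne
        rw [if_neg hne] at h1'
        omega
      have hℓ : w.get ⟨e, by omega⟩ = ℓ := by
        rw [canonW_get n a e (by omega)]
        funext j
        apply Fin.ext
        exact ((dig_iff hk (ℓ j).isLt).1 (h2 j))
      have hstep : r (e + 1) = M.step s ℓ := by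
        show M.evalFrom M.start (w.take (e + 1)) = M.step s ℓ
        rw [evalFrom_take_succ M w e (by omega : e < w.length)]
        rw [hℓ]
        show M.step (r e) ℓ = M.step s ℓ
        rw [hse]
      rw [show k * k ^ e = k ^ (e + 1) from (pow_succ' k e).symm]
      exact (hdig (e + 1) he1 (M.step s ℓ) 1 (by omega)).2 (by rw [hstep, if_pos rfl])
    · refine ⟨r n, ?_, ?_⟩
      · show M.evalFrom M.start (w.take n) ∈ M.accept
        have htake : w.take n = w := by
          conv_lhs => rw [← hwlen]
          exact List.take_length
        rw [htake]
        exact hacc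
      · exact (hdig n le_rfl (r n) 1 (by omega)).2 (by rw [if_pos rfl])

/-! ### the condition set is definable -/

theorem Dfb_cond (hk : 2 ≤ k) {m : ℕ} {σ : Type} [Fintype σ]
    (M : DFA (Fin m → Fin k) σ) :
    Dfb k {h : Fin m ⊕ (σ ⊕ Unit) → ℕ |
      Cond k M (fun j => h (Sum.inl j)) (fun s => h (Sum.inr (Sum.inl s)))
        (h (Sum.inr (Sum.inr ())))} := by
  classical
  have hC1 : Dfb k {h : Fin m ⊕ (σ ⊕ Unit) → ℕ | PowP k (h (Sum.inr (Sum.inr ())))} :=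
    (Dfb_pow (k := k) (tvar (Sum.inr (Sum.inr ())))).of_eq rfl
  have hC2 : Dfb k {h : Fin m ⊕ (σ ⊕ Unit) → ℕ |
      ∀ j, h (Sum.inl j) < h (Sum.inr (Sum.inr ()))} := by
    refine (Dfb.iInter (J := Fin m) (fun j =>
      Dfb_le (k := k) (tsucc (tvar (Sum.inl j))) (tvar (Sum.inr (Sum.inr ()))))).of_eq ?_
    ext h
    simp only [Set.mem_iInter, Set.mem_setOf_eq, treal_tsucc, treal_tvar]
    exact Iff.rfl
  have hC3 : Dfb k {h : Fin m ⊕ (σ ⊕ Unit) → ℕ |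
      DigP k (h (Sum.inr (Sum.inl M.start))) 1 1} := by
    refine (Dfb_dig hk (tvar (Sum.inr (Sum.inl M.start))) (tsucc tzero) 1).of_eq ?_
    ext h
    simp only [Set.mem_setOf_eq, treal_tsucc, treal_tzero, treal_tvar]
  have hC4 : Dfb k {h : Fin m ⊕ (σ ⊕ Unit) → ℕ |
      ∀ p, PowP k p → p ≤ h (Sum.inr (Sum.inr ())) → ∀ s t : σ, s ≠ t →
        ¬(DigP k (h (Sum.inr (Sum.inl s))) p 1 ∧ DigP k (h (Sum.inr (Sum.inl t))) p 1)} := by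
    have base : Dfb k
        (({h' : (Fin m ⊕ (σ ⊕ Unit)) ⊕ Unit → ℕ | PowP k (h' (Sum.inr ()))} ∩
          {h' | h' (Sum.inr ()) ≤ h' (Sum.inl (Sum.inr (Sum.inr ())))})ᶜ ∪
         ⋂ st : σ × σ, (if st.1 = st.2 then Set.univ else
           ({h' : (Fin m ⊕ (σ ⊕ Unit)) ⊕ Unit → ℕ |
              DigP k (h' (Sum.inl (Sum.inr (Sum.inl st.1)))) (h' (Sum.inr ())) 1} ∩
            {h' | DigP k (h' (Sum.inl (Sum.inr (Sum.inl st.2)))) (h' (Sum.inr ())) 1})ᶜ)) := by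
      refine Dfb.union (Dfb.compl (Dfb.inter
        ((Dfb_pow (k := k) (tvar (Sum.inr ()))).of_eq rfl)
        ((Dfb_le (k := k) (tvar (Sum.inr ()))
          (tvar (Sum.inl (Sum.inr (Sum.inr ()))))).of_eq rfl)))
        (Dfb.iInter fun st => ?_)
      by_cases hst : st.1 = st.2
      · rw [if_pos hst]
        exact Dfb.univ
      · rw [if_neg hst]
        exact Dfb.compl (Dfb.inter
          ((Dfb_dig hk (tvar (Sum.inl (Sum.inr (Sum.inl st.1)))) (tvar (Sum.inr ())) 1).of_eq rfl)
          ((Dfb_dig hk (tvar (Sum.inl (Sum.inr (Sum.inl st.2)))) (tvar (Sum.inr ())) 1).of_eq rfl))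
    refine (Dfb.ialls (γ := Unit) base).of_eq ?_
    ext h
    simp only [Set.mem_setOf_eq, Set.mem_union, Set.mem_inter_iff, Set.mem_compl_iff,
      Set.mem_iInter]
    constructor
    · intro H g
      by_cases h1 : PowP k (g ()) ∧ g () ≤ h (Sum.inr (Sum.inr ()))
      · right
        intro st
        by_cases hst : st.1 = st.2
        · rw [if_pos hst]
          trivial
        · rw [if_neg hst]
          intro hmem
          exact H (g ()) h1.1 h1.2 st.1 st.2 hst hmem
      · left
        exact h1
    · intro H p hP hle s t hst hdd
      rcases H (fun _ => p) with hA | hB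
      · exact hA ⟨hP, hle⟩
      · have hB' := hB (s, t)
        rw [if_neg hst] at hB'
        exact hB' hdd
  have hC5 : Dfb k {h : Fin m ⊕ (σ ⊕ Unit) → ℕ |
      ∀ p, PowP k p → k * p ≤ h (Sum.inr (Sum.inr ())) → ∀ s : σ, ∀ ℓ : Fin m → Fin k,
        DigP k (h (Sum.inr (Sum.inl s))) p 1 →
        (∀ j, DigP k (h (Sum.inl j)) p ((ℓ j : ℕ))) →
        DigP k (h (Sum.inr (Sum.inl (M.step s ℓ)))) (k * p) 1} := by
    have base : Dfb k
        (⋂ sl : σ × (Fin m → Fin k),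
          (({h' : (Fin m ⊕ (σ ⊕ Unit)) ⊕ Unit → ℕ | PowP k (h' (Sum.inr ()))} ∩
            ({h' | k * h' (Sum.inr ()) ≤ h' (Sum.inl (Sum.inr (Sum.inr ())))} ∩
             ({h' | DigP k (h' (Sum.inl (Sum.inr (Sum.inl sl.1)))) (h' (Sum.inr ())) 1} ∩
              ⋂ j : Fin m, {h' : (Fin m ⊕ (σ ⊕ Unit)) ⊕ Unit → ℕ |
                DigP k (h' (Sum.inl (Sum.inl j))) (h' (Sum.inr ())) ((sl.2 j : ℕ))})))ᶜ ∪
           {h' | DigP k (h' (Sum.inl (Sum.inr (Sum.inl (M.step sl.1 sl.2)))))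
              (k * h' (Sum.inr ())) 1})) := by
      refine Dfb.iInter fun sl => Dfb.union (Dfb.compl (Dfb.inter
        ((Dfb_pow (k := k) (tvar (Sum.inr ()))).of_eq rfl)
        (Dfb.inter ?_ (Dfb.inter
          ((Dfb_dig hk (tvar (Sum.inl (Sum.inr (Sum.inl sl.1)))) (tvar (Sum.inr ())) 1).of_eq rfl)
          (Dfb.iInter fun j =>
            (Dfb_dig hk (tvar (Sum.inl (Sum.inl j))) (tvar (Sum.inr ())) ((sl.2 j : ℕ))).of_eq
              rfl))))) ?_
      · refine (Dfb_le (k := k) (tsmul k (tvar (Sum.inr ())))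
          (tvar (Sum.inl (Sum.inr (Sum.inr ()))))).of_eq ?_
        ext h'
        simp only [Set.mem_setOf_eq, treal_tsmul, treal_tvar]
      · refine (Dfb_dig hk (tvar (Sum.inl (Sum.inr (Sum.inl (M.step sl.1 sl.2)))))
          (tsmul k (tvar (Sum.inr ()))) 1).of_eq ?_
        ext h'
        simp only [Set.mem_setOf_eq, treal_tsmul, treal_tvar]
    refine (Dfb.ialls (γ := Unit) base).of_eq ?_
    ext h
    simp only [Set.mem_setOf_eq, Set.mem_union, Set.mem_inter_iff, Set.mem_compl_iff,
      Set.mem_iInter]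
    constructor
    · intro H g sl
      by_cases h1 : PowP k (g ()) ∧ k * g () ≤ h (Sum.inr (Sum.inr ())) ∧
          DigP k (h (Sum.inr (Sum.inl sl.1))) (g ()) 1 ∧
          (∀ j, DigP k (h (Sum.inl j)) (g ()) ((sl.2 j : ℕ)))
      · right
        exact H (g ()) h1.1 h1.2.1 sl.1 sl.2 h1.2.2.1 h1.2.2.2
      · left
        intro hmem
        exact h1 ⟨hmem.1, hmem.2.1, hmem.2.2.1, hmem.2.2.2⟩
    · intro H p hP hle s ℓ hdig hdigs
      rcases H (fun _ => p) (s, ℓ) with hA | hB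
      · exact absurd ⟨hP, hle, hdig, hdigs⟩ hA
      · exact hB
  have hC6 : Dfb k {h : Fin m ⊕ (σ ⊕ Unit) → ℕ |
      ∃ s, s ∈ M.accept ∧ DigP k (h (Sum.inr (Sum.inl s))) (h (Sum.inr (Sum.inr ()))) 1} := by
    have base : Dfb k (⋃ s : σ, (if s ∈ M.accept then
        {h : Fin m ⊕ (σ ⊕ Unit) → ℕ |
          DigP k (h (Sum.inr (Sum.inl s))) (h (Sum.inr (Sum.inr ()))) 1} else ∅)) := by
      refine Dfb.iUnion fun s => ?_
      by_cases hs : s ∈ M.accept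
      · rw [if_pos hs]
        exact (Dfb_dig hk (tvar (Sum.inr (Sum.inl s))) (tvar (Sum.inr (Sum.inr ()))) 1).of_eq rfl
      · rw [if_neg hs]
        exact Dfb.univ.compl.of_eq (by simp)
    refine base.of_eq ?_
    ext h
    simp only [Set.mem_setOf_eq, Set.mem_iUnion]
    constructor
    · rintro ⟨s, hs, hd⟩
      exact ⟨s, by rw [if_pos hs]; exact hd⟩
    · rintro ⟨s, hs⟩
      by_cases h's : s ∈ M.accept
      · rw [if_pos h's] at hs
        exact ⟨s, h's, hs⟩
      · rw [if_neg h's] at hs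
        exact absurd hs (Set.notMem_empty _)
  refine (hC1.inter (hC2.inter (hC3.inter (hC4.inter (hC5.inter hC6))))).of_eq ?_
  ext h
  simp only [Set.mem_setOf_eq, Set.mem_inter_iff]
  exact Iff.rfl

/-! ### final assembly -/

theorem regular_of_definable {m : ℕ} (hk : 2 ≤ k) {A : Set (Fin m → ℕ)}
    (h : Dfb k A) :
    ∃ (σ : Type) (_ : Fintype σ) (M : DFA (Fin m → Fin k) σ),
      M.accepts = {w : List (Fin m → Fin k) |
        (fun j => ∑ i : Fin w.length, (w.get i j : ℕ) * k ^ (i : ℕ)) ∈ A} := by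
  obtain ⟨φ, hφ⟩ := h
  have hreg := reg_formula (k := k) hk (n := 0) (ι := Fin m) φ
  have h2 := hreg.reindex (Sum.elim id Fin.elim0 : Fin m ⊕ Fin 0 → Fin m)
  have h3 : Reg k A := by
    refine h2.of_eq ?_
    ext a
    have hiff : ∀ xs ys : Fin 0 → ℕ, freal k φ a xs ↔ freal k φ a ys :=
      fun xs ys => iff_of_eq (congrArg (freal k φ a) (Subsingleton.elim xs ys))
    constructor
    · intro hmem
      show freal k φ (fun i => a (Sum.elim id Fin.elim0 (Sum.inl i)))
        (fun j => a (Sum.elim id Fin.elim0 (Sum.inr j)))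
      exact (hiff _ _).2 ((hφ a).1 hmem)
    · intro hmem
      have h0 : freal k φ (fun i => a (Sum.elim id Fin.elim0 (Sum.inl i)))
          (fun j => a (Sum.elim id Fin.elim0 (Sum.inr j))) := hmem
      rw [hφ a]
      exact (hiff _ _).1 h0
  obtain ⟨σ, inst, Md, hMd⟩ := h3
  refine ⟨σ, inst, Md, ?_⟩
  rw [hMd]
  ext w
  show wval k w ∈ A ↔ _
  show _ ↔ (fun j => ∑ i : Fin w.length, (w.get i j : ℕ) * k ^ (i : ℕ)) ∈ A
  rw [show (fun j => ∑ i : Fin w.length, (w.get i j : ℕ) * k ^ (i : ℕ)) = wval k w from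
    funext fun j => sum_eq_wval w j]

theorem definable_of_regular {m : ℕ} (hk : 2 ≤ k) {A : Set (Fin m → ℕ)}
    {σ : Type} (inst : Fintype σ) (Md : DFA (Fin m → Fin k) σ)
    (hMd : Md.accepts = {w : List (Fin m → Fin k) |
      (fun j => ∑ i : Fin w.length, (w.get i j : ℕ) * k ^ (i : ℕ)) ∈ A}) :
    Dfb k A := by
  have hk0 : 0 < k := by omega
  have hsum : ∀ w : List (Fin m → Fin k),
      (fun j => ∑ i : Fin w.length, (w.get i j : ℕ) * k ^ (i : ℕ)) = wval k w :=
    fun w => funext fun j => sum_eq_wval w j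
  have hAn : ∀ a : Fin m → ℕ, a ∈ A ↔ ∃ n : ℕ, (∀ j, a j < k ^ n) ∧
      Md.evalFrom Md.start (canonW k hk0 n a) ∈ Md.accept := by
    intro a
    constructor
    · intro ha
      set n := Finset.univ.sup a with hn
      have hb : ∀ j, a j < k ^ n := by
        intro j
        have h1 : a j ≤ n := Finset.le_sup (Finset.mem_univ j)
        have h2 : n < k ^ n := Nat.lt_pow_self (n := n) (by omega)
        omega
      have hval : wval k (canonW k hk0 n a) = a :=
        funext fun j => wval_canonW hk j (hb j)
      have hmem : canonW k hk0 n a ∈ Md.accepts := by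
        rw [hMd]
        show (fun j => ∑ i : Fin (canonW k hk0 n a).length,
          ((canonW k hk0 n a).get i j : ℕ) * k ^ (i : ℕ)) ∈ A
        rw [hsum (canonW k hk0 n a), hval]
        exact ha
      exact ⟨n, hb, by rw [DFA.mem_accepts] at hmem; exact hmem⟩
    · rintro ⟨n, hb, hacc⟩
      have hmem : canonW k hk0 n a ∈ Md.accepts := by
        rw [DFA.mem_accepts]
        exact hacc
      rw [hMd] at hmem
      have hval : wval k (canonW k hk0 n a) = a :=
        funext fun j => wval_canonW hk j (hb j)
      have := hmem
      change (fun j => ∑ i : Fin (canonW k hk0 n a).length,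
        ((canonW k hk0 n a).get i j : ℕ) * k ^ (i : ℕ)) ∈ A at this
      rw [hsum (canonW k hk0 n a), hval] at this
      exact this
  have hD := Dfb.iexs (γ := σ ⊕ Unit) (Dfb_cond hk Md)
  refine hD.of_eq ?_
  ext a
  rw [Set.mem_setOf_eq]
  rw [hAn a, ← cond_iff hk hk0 Md a]
  constructor
  · rintro ⟨X, L, hC⟩
    exact ⟨Sum.elim X (fun _ => L), hC⟩
  · rintro ⟨g, hC⟩
    exact ⟨fun s => g (Sum.inl s), g (Sum.inr ()), hC⟩

end BB

/-- Büchi–Bruyère: `A ⊆ ℕ^m` is definable without parameters by a first-order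
`L_BA`-formula in the standard structure on `ℕ` iff the language of base-`k`
expansions of elements of `A` is regular (accepted by a DFA with finitely many
states). -/
theorem stmt1 (k m : ℕ) (hk : 2 ≤ k) (hm : 1 ≤ m) (A : Set (Fin m → ℕ)) :
    (∃ φ : LBA.Formula (Fin m), ∀ a : Fin m → ℕ,
        a ∈ A ↔ (letI := stdStructure k; φ.Realize a)) ↔
    (∃ (σ : Type) (_ : Fintype σ) (M : DFA (Fin m → Fin k) σ),
        M.accepts = {w : List (Fin m → Fin k) |
          (fun j => ∑ i : Fin w.length, (w.get i j : ℕ) * k ^ (i : ℕ)) ∈ A}) := by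
  constructor
  · intro h
    exact BB.regular_of_definable hk h
  · rintro ⟨σ, inst, Md, hMd⟩
    exact BB.definable_of_regular hk inst Md hMd
end

section
/- If M satisfies the base axioms, then V(x) ≤ x for every x ∈ M. -/
/-- The base axioms for a Büchi-arithmetic-like structure `M` with distinguished
element `one` and function `V`, over the base `k`. -/
structure BuchiAxioms (k : ℕ) (M : Type*) [AddCancelCommMonoid M] [LinearOrder M]
    (one : M) (V : M → M) : Prop where
  transl : ∀ x y z : M, x ≤ y ↔ x + z ≤ y + z
  one_pos : (0 : M) < one
  discrete : ∀ x y : M, x < y → x + one ≤ y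
  ord0 : ∀ x : M, 0 ≤ x
  ord1 : ∀ x y : M, x ≤ y ↔ ∃ z ≤ y, z + x = y
  mod : ∀ x : M, ∃ a : ℕ, a < k ∧ ∃ z : M, x = a • one + k • z ∨ a • one = x + k • z
  v0 : V 0 = 0 ∧ V one = one
  v1 : (∀ x : M, V (k • x) = k • V x) ∧
    ∀ (d : M) (a : ℕ), (0 < d ∧ V d = d) → 1 ≤ a → a < k → V (a • d) = d
  v2 : ∀ x y : M, 0 < x → 0 < y → V x < V y → V (x + y) = V x
  v3 : ∀ x : M, 0 < x → ∃ y ≤ x, ∃ a : ℕ, 1 ≤ a ∧ a < k ∧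
    x = y + a • V x ∧ (V x < V y ∨ y = 0)
  v4 : ∀ x : M, 0 < x → ∃ d : M, (0 < d ∧ V d = d) ∧ d ≤ x ∧ x < k • d
  v5 : ∀ x : M, V (V x) = V x

/-- `(x)_d = a` : the digit of `x` at position `d` (a power of `k`) equals `a`. -/
def DigitEq {M : Type*} [AddCancelCommMonoid M] [LinearOrder M]
    (V : M → M) (x d : M) (a : ℕ) : Prop :=
  (0 < d ∧ V d = d) ∧ ∃ y < d, ∃ z ≤ x, x = y + a • d + z ∧ (z = 0 ∨ d < V z)

/-- If `M` satisfies the base axioms, then `V(x) ≤ x` for every `x`. -/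
theorem stmt3 (k : ℕ) (hk : 2 ≤ k) (M : Type*) [AddCancelCommMonoid M] [LinearOrder M]
    (one : M) (V : M → M) (H : BuchiAxioms k M one V) :
    ∀ x : M, V x ≤ x := by
  intro x
  rcases eq_or_lt_of_le (H.ord0 x) with h0 | hx
  · rw [← h0, H.v0.1]
  · obtain ⟨y, hyx, a, ha1, hak, hxeq, _⟩ := H.v3 x hx
    have h1 : a • V x ≤ x := (H.ord1 _ _).2 ⟨y, hyx, hxeq.symm⟩
    have h2 : V x ≤ a • V x := by
      obtain ⟨b, rfl⟩ := Nat.exists_eq_add_of_le ha1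
      calc V x = 0 + V x := (zero_add _).symm
        _ ≤ b • V x + V x := (H.transl 0 (b • V x) (V x)).1 (H.ord0 _)
        _ = (1 + b) • V x := by rw [add_nsmul, one_nsmul, add_comm]
    exact h2.trans h1
end

section
/- If M satisfies the base axioms, then for every x ∈ M with x > 0 there exists a ∈ {1,…,k−1} such that (x)_{V(x)} = a. -/
/-- If `M` satisfies the base axioms, then for every `x > 0` there is a digit
`a ∈ {1,…,k-1}` with `(x)_{V(x)} = a`. -/
theorem stmt4 (k : ℕ) (hk : 2 ≤ k) (M : Type*) [AddCancelCommMonoid M] [LinearOrder M]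
    (one : M) (V : M → M) (H : BuchiAxioms k M one V) :
    ∀ x : M, 0 < x → ∃ a : ℕ, 1 ≤ a ∧ a < k ∧ DigitEq V x (V x) a := by
  intro x hx
  obtain ⟨y, hyx, a, ha1, hak, hxy, hdisj⟩ := H.v3 x hx
  have hVx : 0 < V x := by
    rcases (H.ord0 (V x)).lt_or_eq with h | h
    · exact h
    · exfalso
      have hVx0 : V x = 0 := h.symm
      have hxy' : x = y := by
        simpa [hVx0] using hxy
      rcases hdisj with h2 | h2
      · rw [hxy'] at h2; exact lt_irrefl _ h2
      · rw [h2] at hxy'; exact absurd hxy'.symm hx.ne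
  refine ⟨a, ha1, hak, ⟨hVx, H.v5 x⟩, 0, hVx, y, hyx, ?_, ?_⟩
  · rw [zero_add, add_comm]; exact hxy
  · rcases hdisj with h | h
    · exact Or.inr h
    · exact Or.inl h
end

section
/- If M satisfies the base axioms, then base-k digits are unique: for every x ∈ M with x > 0, every d ∈ M, and all a, a' ∈ {0,…,k−1}, if (x)_d = a and (x)_d = a' then a = a'. -/
section Aux

variable {k : ℕ} {M : Type*} [AddCancelCommMonoid M] [LinearOrder M]
  {one : M} {V : M → M}

lemma buchi_le_add (H : BuchiAxioms k M one V) (u v : M) : u ≤ u + v := by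
  have h := (H.transl 0 v u).mp (H.ord0 v)
  simpa [add_comm] using h

lemma buchi_le_add' (H : BuchiAxioms k M one V) (u v : M) : u ≤ v + u := by
  simpa [add_comm] using buchi_le_add H u v

lemma buchi_add_le_right (H : BuchiAxioms k M one V) {a b : M} (h : a ≤ b) (c : M) :
    a + c ≤ b + c := (H.transl a b c).mp h

lemma buchi_add_lt_right (H : BuchiAxioms k M one V) {a b : M} (h : a < b) (c : M) :
    a + c < b + c :=
  lt_of_le_of_ne (buchi_add_le_right H h.le c)
    (fun hc => h.ne (add_right_cancel hc))

lemma buchi_nsmul_le (H : BuchiAxioms k M one V) {m n : ℕ} (h : m ≤ n) (d : M) :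
    m • d ≤ n • d := by
  obtain ⟨c, rfl⟩ := Nat.exists_eq_add_of_le h
  rw [add_nsmul]
  exact buchi_le_add H _ _

lemma buchi_V_le (H : BuchiAxioms k M one V) {z : M} (hz : 0 < z) : V z ≤ z := by
  obtain ⟨y, -, a, ha1, -, heq, -⟩ := H.v3 z hz
  obtain ⟨b, rfl⟩ : ∃ b, a = b + 1 := ⟨a - 1, by omega⟩
  calc V z ≤ V z + (y + b • V z) := buchi_le_add H _ _
    _ = y + (b + 1) • V z := by rw [add_nsmul, one_nsmul]; abel
    _ = z := heq.symm

lemma buchi_pos_of_ne (H : BuchiAxioms k M one V) {z : M} (hz : z ≠ 0) : 0 < z :=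
  lt_of_le_of_ne (H.ord0 z) (Ne.symm hz)

/-- No other power of `k` lies strictly between a power `d` and `k • d`. -/
lemma buchi_pow_gap (hk : 2 ≤ k) (H : BuchiAxioms k M one V) {d e : M}
    (hd : 0 < d ∧ V d = d) (he : 0 < e ∧ V e = e) (hlt : d < e) : k • d ≤ e := by
  obtain ⟨r, hre, hr⟩ := (H.ord1 d e).mp hlt.le
  have hrpos : 0 < r := by
    refine buchi_pos_of_ne H (fun h => ?_)
    rw [h, zero_add] at hr
    exact hlt.ne hr
  have hVr : V r = d := by
    rcases lt_trichotomy (V r) (V d) with h | h | h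
    · exfalso
      have h2 := H.v2 r d hrpos hd.1 h
      rw [hr] at h2
      rw [he.2] at h2
      rw [hd.2] at h
      exact absurd (h2 ▸ h) (lt_asymm hlt)
    · exact h.trans hd.2
    · exfalso
      have h2 := H.v2 d r hd.1 hrpos h
      rw [add_comm, hr, he.2, hd.2] at h2
      exact hlt.ne' h2
  obtain ⟨y0, hy0r, a0, ha01, ha0k, hreq, hcase⟩ := H.v3 r hrpos
  rw [hVr] at hreq hcase
  by_cases hak : a0 + 1 = k
  · have heq : e = y0 + k • d := by
      rw [← hak, add_nsmul, one_nsmul, ← hr, hreq]; abel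
    calc k • d ≤ k • d + y0 := buchi_le_add H _ _
      _ = e := by rw [heq, add_comm]
  · exfalso
    have hak' : a0 + 1 < k := by omega
    have hVad : V ((a0 + 1) • d) = d := H.v1.2 d (a0 + 1) hd (by omega) hak'
    have heq2 : e = y0 + (a0 + 1) • d := by
      rw [add_nsmul, one_nsmul, ← hr, hreq]; abel
    rcases hcase with hVy | hy0
    · have hy0pos : 0 < y0 := by
        refine buchi_pos_of_ne H (fun h => ?_)
        rw [h, H.v0.1] at hVy
        exact absurd (H.ord0 d) (not_le_of_gt hVy)
      have hadpos : 0 < (a0 + 1) • d := by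
        calc (0 : M) < d := hd.1
          _ ≤ (a0 + 1) • d := by
            have := buchi_nsmul_le H (show 1 ≤ a0 + 1 by omega) d
            rwa [one_nsmul] at this
      have h2 := H.v2 ((a0 + 1) • d) y0 hadpos hy0pos (by rw [hVad]; exact hVy)
      rw [hVad] at h2
      rw [add_comm] at h2
      rw [← heq2, he.2] at h2
      exact hlt.ne' h2
    · rw [hy0, zero_add] at heq2
      have : V e = d := heq2 ▸ hVad
      rw [he.2] at this
      exact hlt.ne' this

/-- Key lemma: two digit representations with `a < a'` are impossible. -/
lemma buchi_digit_key (hk : 2 ≤ k) (H : BuchiAxioms k M one V)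
    {x d : M} {a a' : ℕ} (hlt : a < a') (ha'k : a' < k)
    (h1 : DigitEq V x d a) (h2 : DigitEq V x d a') : False := by
  obtain ⟨hPd, y, hy, z, hzx, hx, hz⟩ := h1
  obtain ⟨-, y', hy', z', hz'x, hx', hz'⟩ := h2
  obtain ⟨b, rfl⟩ : ∃ b, a' = a + b := ⟨a' - a, by omega⟩
  have hb1 : 1 ≤ b := by omega
  have e1 : y + a • d + z = y' + (a • d + b • d) + z' := by
    rw [← add_nsmul]; exact hx.symm.trans hx'
  have e2 : y + z = y' + b • d + z' := by
    apply add_left_cancel (a := a • d)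
    calc a • d + (y + z) = y + a • d + z := by abel
      _ = y' + (a • d + b • d) + z' := e1
      _ = a • d + (y' + b • d + z') := by abel
  have hdbd : d ≤ b • d := by
    have := buchi_nsmul_le H hb1 d
    rwa [one_nsmul] at this
  -- the right-hand side of e2 without z' is < k • d
  have hsmall : y' + b • d < k • d := by
    have h1' : y' + b • d < d + b • d := buchi_add_lt_right H hy' _
    have h2' : d + b • d ≤ d + (k - 1) • d := by
      have hb : b • d ≤ (k - 1) • d := buchi_nsmul_le H (by omega) d
      calc d + b • d = b • d + d := by rw [add_comm]
        _ ≤ (k - 1) • d + d := buchi_add_le_right H hb d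
        _ = d + (k - 1) • d := by rw [add_comm]
    calc y' + b • d < d + b • d := h1'
      _ ≤ d + (k - 1) • d := h2'
      _ = k • d := by
        rw [show d + (k-1) • d = 1 • d + (k-1) • d by rw [one_nsmul], ← add_nsmul,
          show 1 + (k - 1) = k by omega]
  rcases hz with hz0 | hzV
  · -- z = 0 : then y = y' + b • d + z' ≥ d > y
    rw [hz0, add_zero] at e2
    have : d ≤ y := by
      calc d ≤ b • d := hdbd
        _ ≤ b • d + (y' + z') := buchi_le_add H _ _
        _ = y' + b • d + z' := by abel
        _ = y := e2.symm
    exact absurd this (not_le_of_gt hy)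
  · have hzpos : 0 < z := by
      refine buchi_pos_of_ne H (fun h => ?_)
      rw [h, H.v0.1] at hzV
      exact absurd (H.ord0 d) (not_le_of_gt hzV)
    have hVzpos : 0 < V z := hPd.1.trans hzV
    have hVzk : k • d ≤ V z := buchi_pow_gap hk H hPd ⟨hVzpos, H.v5 z⟩ hzV
    have hzk : k • d ≤ z := hVzk.trans (buchi_V_le H hzpos)
    rcases hz' with hz0' | hzV'
    · -- z' = 0 : k•d ≤ z ≤ y + z = y' + b•d < k•d
      rw [hz0', add_zero] at e2
      have : k • d ≤ y' + b • d := by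
        calc k • d ≤ z := hzk
          _ ≤ z + y := buchi_le_add H _ _
          _ = y + z := by rw [add_comm]
          _ = y' + b • d := e2
      exact absurd this (not_le_of_gt hsmall)
    · have hz'pos : 0 < z' := by
        refine buchi_pos_of_ne H (fun h => ?_)
        rw [h, H.v0.1] at hzV'
        exact absurd (H.ord0 d) (not_le_of_gt hzV')
      have hVz'pos : 0 < V z' := hPd.1.trans hzV'
      have hVz'k : k • d ≤ V z' := buchi_pow_gap hk H hPd ⟨hVz'pos, H.v5 z'⟩ hzV'
      rcases le_total z' z with hle | hle
      · obtain ⟨w, hwz, hw⟩ := (H.ord1 z' z).mp hle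
        have e3 : y + w = y' + b • d := by
          apply add_right_cancel (b := z')
          calc y + w + z' = y + (w + z') := by abel
            _ = y + z := by rw [hw]
            _ = y' + b • d + z' := e2
        rcases eq_or_lt_of_le (H.ord0 w) with hw0 | hwpos
        · rw [← hw0, add_zero] at e3
          have : d ≤ y := by
            calc d ≤ b • d := hdbd
              _ ≤ b • d + y' := buchi_le_add H _ _
              _ = y' + b • d := by rw [add_comm]
              _ = y := e3.symm
          exact absurd this (not_le_of_gt hy)
        · have hwlt : w < k • d := by
            calc w ≤ y + w := buchi_le_add' H _ _
              _ = y' + b • d := e3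
              _ < k • d := hsmall
          have hVw : V w < V z' := by
            calc V w ≤ w := buchi_V_le H hwpos
              _ < k • d := hwlt
              _ ≤ V z' := hVz'k
          have h4 := H.v2 w z' hwpos hz'pos hVw
          rw [hw] at h4
          have : V z < V z := by
            calc V z = V w := h4
              _ ≤ w := buchi_V_le H hwpos
              _ < k • d := hwlt
              _ ≤ V z := hVzk
          exact absurd this (lt_irrefl _)
      · obtain ⟨w, hwz, hw⟩ := (H.ord1 z z').mp hle
        have e3 : y = y' + b • d + w := by
          apply add_right_cancel (b := z)
          calc y + z = y' + b • d + z' := e2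
            _ = y' + b • d + (w + z) := by rw [hw]
            _ = y' + b • d + w + z := by abel
        have : d ≤ y := by
          calc d ≤ b • d := hdbd
            _ ≤ b • d + (y' + w) := buchi_le_add H _ _
            _ = y' + b • d + w := by abel
            _ = y := e3.symm
        exact absurd this (not_le_of_gt hy)

end Aux

/-- If `M` satisfies the base axioms, then base-`k` digits are unique. -/
theorem stmt5 (k : ℕ) (hk : 2 ≤ k) (M : Type*) [AddCancelCommMonoid M] [LinearOrder M]
    (one : M) (V : M → M) (H : BuchiAxioms k M one V) :
    ∀ x : M, 0 < x → ∀ d : M, ∀ a a' : ℕ, a < k → a' < k →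
      DigitEq V x d a → DigitEq V x d a' → a = a' := by
  intro x _ d a a' hak ha'k h1 h2
  rcases lt_trichotomy a a' with h | h | h
  · exact absurd (buchi_digit_key hk H h ha'k h1 h2) not_false
  · exact h
  · exact absurd (buchi_digit_key hk H h hak h2 h1) not_false
end

section
/- If M satisfies the base axioms, then for every x ∈ M that is not of the form k•z for any z ∈ M, one has V(x) = 1. -/
/-- If `M` satisfies the base axioms, then for every `x` not of the form `k • z`
one has `V(x) = 1`. -/
theorem stmt6 (k : ℕ) (hk : 2 ≤ k) (M : Type*) [AddCancelCommMonoid M] [LinearOrder M]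
    (one : M) (V : M → M) (H : BuchiAxioms k M one V) :
    ∀ x : M, (¬ ∃ z : M, x = k • z) → V x = one := by
  intro x hx
  have hx0 : x ≠ 0 := by rintro rfl; exact hx ⟨0, by simp⟩
  have hxpos : 0 < x := lt_of_le_of_ne (H.ord0 x) (Ne.symm hx0)
  have addle : ∀ a b c : M, a ≤ b → a + c ≤ b + c := fun a b c h => (H.transl a b c).mp h
  have addleL : ∀ a b c : M, a ≤ b → c + a ≤ c + b := by
    intro a b c h; rw [add_comm c a, add_comm c b]; exact addle a b c h
  have lead : ∀ a c : M, a ≤ a + c := fun a c => by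
    have := addleL 0 c a (H.ord0 c); simpa using this
  have addlt : ∀ a b c : M, a < b → a + c < b + c := by
    intro a b c h
    rcases lt_or_ge (a + c) (b + c) with h' | h'
    · exact h'
    · exact absurd ((H.transl b a c).mpr h') (not_le.mpr h)
  have smul_mono : ∀ (n : ℕ) (a b : M), a ≤ b → n • a ≤ n • b := by
    intro n a b h
    induction n with
    | zero => simp
    | succ m ih =>
        rw [succ_nsmul, succ_nsmul]
        exact le_trans (addle _ _ _ ih) (addleL _ _ _ h)
  have Vpos : ∀ z : M, 0 < z → 0 < V z := by
    intro z hz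
    rcases H.v3 z hz with ⟨y, _, a, _, _, heq, hor⟩
    by_contra h
    have hV0 : V z = 0 := le_antisymm (not_lt.mp h) (H.ord0 _)
    rw [hV0, smul_zero, add_zero] at heq
    rcases hor with h' | h'
    · rw [heq] at h'; exact lt_irrefl _ h'
    · exact hz.ne' (heq.trans h')
  have Pone : 0 < one ∧ V one = one := ⟨H.one_pos, H.v0.2⟩
  have oneLe : ∀ z : M, 0 < z → one ≤ z := by
    intro z hz
    have := H.discrete 0 z hz
    simpa using this
  have hVsmul : ∀ a : ℕ, a ≠ 0 → a < k → V (a • one) = one := by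
    intro a ha0 hak
    exact H.v1.2 one a Pone (Nat.one_le_iff_ne_zero.mpr ha0) hak
  have smul_pos : ∀ (n : ℕ) (z : M), n ≠ 0 → 0 < z → 0 < n • z := by
    intro n z hn hz
    obtain ⟨m, rfl⟩ := Nat.exists_eq_succ_of_ne_zero hn
    rw [succ_nsmul]
    exact lt_of_lt_of_le hz (le_trans (lead z (m • z)) (le_of_eq (add_comm _ _)))
  rcases H.mod x with ⟨a, hak, z, hcase | hcase⟩
  · -- x = a • one + k • z
    by_cases hz : z = 0
    · subst hz
      rw [smul_zero, add_zero] at hcase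
      have ha0 : a ≠ 0 := by rintro rfl; simp at hcase; exact hx0 hcase
      rw [hcase]; exact hVsmul a ha0 hak
    · have hzpos : 0 < z := lt_of_le_of_ne (H.ord0 z) (Ne.symm hz)
      have ha0 : a ≠ 0 := by
        rintro rfl; rw [zero_smul, zero_add] at hcase; exact hx ⟨z, hcase⟩
      have hVa : V (a • one) = one := hVsmul a ha0 hak
      have hVkz : V (k • z) = k • V z := H.v1.1 z
      have hVz : 0 < V z := Vpos z hzpos
      have h1 : one ≤ V z := oneLe _ hVz
      have h2 : V z < V z + V z := by
        have := addlt 0 (V z) (V z) hVz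
        simpa using this
      have h3 : V z + V z ≤ k • V z := by
        have hrw : k • V z = 2 • V z + (k - 2) • V z := by
          rw [← add_nsmul]; congr 1; omega
        rw [hrw, two_nsmul]; exact lead _ _
      have hlt : one < k • V z := lt_of_le_of_lt h1 (lt_of_lt_of_le h2 h3)
      have hVaPos : 0 < a • one := smul_pos a one ha0 H.one_pos
      have hkzPos : 0 < k • z := smul_pos k z (by omega) hzpos
      have hv2 := H.v2 (a • one) (k • z) hVaPos hkzPos (by rw [hVa, hVkz]; exact hlt)
      rw [hcase, hv2, hVa]
  · -- a • one = x + k • z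
    by_cases hz : z = 0
    · subst hz
      rw [smul_zero, add_zero] at hcase
      have ha0 : a ≠ 0 := by
        rintro rfl; rw [zero_smul] at hcase; exact hx0 hcase.symm
      rw [← hcase]; exact hVsmul a ha0 hak
    · exfalso
      have hzpos : 0 < z := lt_of_le_of_ne (H.ord0 z) (Ne.symm hz)
      have h1 : one ≤ z := oneLe z hzpos
      have hk1 : k • one ≤ k • z := smul_mono k one z h1
      have h2 : k • z ≤ x + k • z := by
        have := addle 0 x (k • z) (H.ord0 x)
        simpa using this
      have h3 : a • one ≤ (k - 1) • one := by
        have hrw : (k - 1) • one = a • one + (k - 1 - a) • one := by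
          rw [← add_nsmul]; congr 1; omega
        rw [hrw]; exact lead _ _
      have h4 : (k - 1) • one < k • one := by
        have hrw : k • one = (k - 1) • one + one := by
          rw [← succ_nsmul]; congr 1; omega
        have := addlt 0 one ((k - 1) • one) H.one_pos
        rw [hrw]
        simpa [add_comm] using this
      have : a • one < a • one :=
        lt_of_lt_of_le (lt_of_le_of_lt h3 h4)
          (le_trans hk1 (le_trans h2 (le_of_eq hcase.symm)))
      exact lt_irrefl _ this
end

section
/- If M satisfies the base axioms, then for every d ∈ M with P_k(d) and d > 1 there exists d' ∈ M with P_k(d') and d = k•d'. -/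
/-- If `M` satisfies the base axioms, then every power of `k` greater than `1`
is `k` times a power of `k`. -/
theorem stmt7 (k : ℕ) (hk : 2 ≤ k) (M : Type*) [AddCancelCommMonoid M] [LinearOrder M]
    (one : M) (V : M → M) (H : BuchiAxioms k M one V) :
    ∀ d : M, (0 < d ∧ V d = d) → one < d →
      ∃ d' : M, (0 < d' ∧ V d' = d') ∧ d = k • d' := by
  obtain ⟨htransl, hone, hdisc, hord0, hord1, hmod, ⟨hv00, hv01⟩, ⟨hv1a, hv1b⟩,
    hv2, hv3, hv4, hv5⟩ := H
  -- basic order facts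
  have addle : ∀ a b c : M, a ≤ b → a + c ≤ b + c := fun a b c h => (htransl a b c).1 h
  have lerad : ∀ u v : M, u ≤ u + v := fun u v => by
    have := (htransl 0 v u).1 (hord0 v)
    simpa [add_comm] using this
  have addlt : ∀ a b c : M, a < b → a + c < b + c := fun a b c h => by
    rcases lt_or_ge (a + c) (b + c) with h' | h'
    · exact h'
    · exact absurd ((htransl b a c).2 h') (not_le_of_gt h)
  have sumzero : ∀ u v : M, u + v = 0 → u = 0 ∧ v = 0 := by
    intro u v huv
    have h1 : u ≤ 0 := huv ▸ lerad u v
    have hu : u = 0 := le_antisymm h1 (hord0 u)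
    refine ⟨hu, ?_⟩
    rw [hu, zero_add] at huv; exact huv
  have addle2 : ∀ a b c d : M, a ≤ b → c ≤ d → a + c ≤ b + d := by
    intro a b c d h1 h2
    calc a + c ≤ b + c := addle a b c h1
    _ = c + b := add_comm _ _
    _ ≤ d + b := addle c d b h2
    _ = b + d := add_comm _ _
  have addlt2 : ∀ a b c d : M, a < b → c ≤ d → a + c < b + d := by
    intro a b c d h1 h2
    calc a + c < b + c := addlt a b c h1
    _ = c + b := add_comm _ _
    _ ≤ d + b := addle c d b h2
    _ = b + d := add_comm _ _
  have smul_le : ∀ (n : ℕ) (x y : M), x ≤ y → n • x ≤ n • y := by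
    intro n x y h
    induction n with
    | zero => simp
    | succ m ih =>
      rw [succ_nsmul, succ_nsmul]
      exact addle2 _ _ _ _ ih h
  have smul_lt : ∀ (n : ℕ), 1 ≤ n → ∀ x y : M, x < y → n • x < n • y := by
    intro n hn x y h
    obtain ⟨m, rfl⟩ := Nat.exists_eq_add_of_le hn
    rw [add_nsmul, add_nsmul, one_nsmul, one_nsmul]
    exact addlt2 _ _ _ _ h (smul_le m x y (le_of_lt h))
  have ksmul_inj : ∀ x y : M, k • x = k • y → x = y := by
    intro x y hxy
    rcases lt_trichotomy x y with h | h | h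
    · exact absurd hxy (ne_of_lt (smul_lt k (by omega) x y h))
    · exact h
    · exact absurd hxy.symm (ne_of_lt (smul_lt k (by omega) y x h))
  have Vpos : ∀ x : M, 0 < x → 0 < V x := by
    intro x hx
    rcases (hord0 (V x)).lt_or_eq with h | h
    · exact h
    · exfalso
      obtain ⟨y, hy, a, ha1, hak, hxeq, hcase⟩ := hv3 x hx
      rw [← h, smul_zero, add_zero] at hxeq
      rcases hcase with hlt | h0
      · rw [← hxeq] at hlt; exact lt_irrefl _ hlt
      · rw [h0] at hxeq; exact hx.ne' hxeq
  have one_le : ∀ x : M, 0 < x → one ≤ x := by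
    intro x hx
    have := hdisc 0 x hx
    simpa using this
  have one_lt_ksmul : ∀ x : M, 0 < x → one < k • x := by
    intro x hx
    have h1 : one ≤ x := one_le x hx
    have h2 : one < one + one := by
      have := addlt 0 one one hone
      simpa using this
    have h3 : one + one ≤ x + x := addle2 _ _ _ _ h1 h1
    have h4 : x + x ≤ k • x := by
      obtain ⟨m, rfl⟩ := Nat.exists_eq_add_of_le hk
      rw [add_nsmul]
      have : (2 : ℕ) • x = x + x := two_nsmul x
      rw [this]
      exact lerad _ _
    exact lt_of_lt_of_le h2 (le_trans h3 h4)
  have smul_pos : ∀ (a : ℕ), 1 ≤ a → ∀ x : M, 0 < x → 0 < a • x := by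
    intro a ha x hx
    obtain ⟨m, rfl⟩ := Nat.exists_eq_add_of_le ha
    rw [add_nsmul, one_nsmul]
    calc (0 : M) < x := hx
    _ ≤ x + m • x := lerad _ _
  -- main proof
  intro d ⟨hd0, hdV⟩ hd1
  obtain ⟨a, hak, z, hz | hz⟩ := hmod d
  · -- d = a • one + k • z
    by_cases hz0 : z = 0
    · -- then d = a • one
      rw [hz0, smul_zero, add_zero] at hz
      rcases Nat.eq_zero_or_pos a with ha | ha
      · rw [ha, zero_nsmul] at hz; exact absurd hz.symm (ne_of_lt hd0)
      · have : V (a • one) = one := hv1b one a ⟨hone, hv01⟩ ha hak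
        rw [← hz] at this
        rw [hdV] at this
        exact absurd this (ne_of_gt hd1)
    · have hzpos : 0 < z := (hord0 z).lt_of_ne (fun h => hz0 h.symm)
      rcases Nat.eq_zero_or_pos a with ha | ha
      · -- d = k • z
        rw [ha, zero_nsmul, zero_add] at hz
        have hVd : V d = k • V z := by rw [hz]; exact hv1a z
        have : k • V z = k • z := by rw [← hVd, hdV, hz]
        have hVz : V z = z := ksmul_inj _ _ this
        exact ⟨z, ⟨hzpos, hVz⟩, hz⟩
      · -- contradiction: V d = one
        exfalso
        have hVa : V (a • one) = one := hv1b one a ⟨hone, hv01⟩ ha hak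
        have hVkz : V (k • z) = k • V z := hv1a z
        have hlt : V (a • one) < V (k • z) := by
          rw [hVa, hVkz]
          exact one_lt_ksmul (V z) (Vpos z hzpos)
        have hpos1 : 0 < a • one := smul_pos a ha one hone
        have hpos2 : 0 < k • z := smul_pos k (by omega) z hzpos
        have := hv2 (a • one) (k • z) hpos1 hpos2 hlt
        rw [← hz, hdV, hVa] at this
        exact (ne_of_gt hd1) this
  · -- a • one = d + k • z
    rcases Nat.eq_zero_or_pos a with ha | ha
    · rw [ha, zero_nsmul] at hz
      exact absurd (sumzero d (k • z) hz.symm).1 (ne_of_gt hd0)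
    have hVa : V (a • one) = one := hv1b one a ⟨hone, hv01⟩ ha hak
    by_cases hz0 : z = 0
    · exfalso
      rw [hz0, smul_zero, add_zero] at hz
      rw [hz, hdV] at hVa
      exact (ne_of_gt hd1) hVa
    have hzpos : 0 < z := (hord0 z).lt_of_ne (fun h => hz0 h.symm)
    have hVkz : V (k • z) = k • V z := hv1a z
    have hpos2 : 0 < k • z := smul_pos k (by omega) z hzpos
    rcases lt_trichotomy (V d) (V (k • z)) with h | h | h
    · exfalso
      have := hv2 d (k • z) hd0 hpos2 h
      rw [← hz, hVa, hdV] at this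
      exact (ne_of_gt hd1) this.symm
    · refine ⟨V z, ⟨Vpos z hzpos, hv5 z⟩, ?_⟩
      rw [← hVkz, ← h, hdV]
    · exfalso
      have := hv2 (k • z) d hpos2 hd0 h
      rw [add_comm, ← hz, hVa, hVkz] at this
      exact (ne_of_lt (one_lt_ksmul (V z) (Vpos z hzpos))) this
end

section
/- If M satisfies the base axioms, then for all x, y ∈ M with x > 0, y > 0 and V(x) ≤ V(y), one has V(x + y) ≥ V(x). -/
/-- If `M` satisfies the base axioms, then for `x, y > 0` with `V(x) ≤ V(y)`
one has `V(x + y) ≥ V(x)`. -/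
theorem stmt8 (k : ℕ) (hk : 2 ≤ k) (M : Type*) [AddCancelCommMonoid M] [LinearOrder M]
    (one : M) (V : M → M) (H : BuchiAxioms k M one V) :
    ∀ x y : M, 0 < x → 0 < y → V x ≤ V y → V x ≤ V (x + y) := by
  -- basic order facts
  have hadd_le : ∀ a b c : M, a ≤ b → a + c ≤ b + c := fun a b c h => (H.transl a b c).mp h
  have hpos_add : ∀ a b : M, 0 < a → 0 < a + b := by
    intro a b ha
    have : a + 0 ≤ a + b := by
      rw [add_comm a 0, add_comm a b]; exact hadd_le 0 b a (H.ord0 b)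
    calc (0:M) < a := ha
      _ = a + 0 := (add_zero a).symm
      _ ≤ a + b := this
  have hVpos : ∀ z : M, 0 < z → 0 < V z := by
    intro z hz
    rcases lt_or_eq_of_le (H.ord0 (V z)) with h | h
    · exact h
    · exfalso
      rcases H.v3 z hz with ⟨w, hwz, a, ha1, hak, hzw, hcase⟩
      rw [← h, smul_zero, add_zero] at hzw
      rcases hcase with hlt | hw0
      · rw [← hzw] at hlt; exact lt_irrefl _ hlt
      · rw [hw0] at hzw; exact lt_irrefl _ (hzw ▸ hz)
  intro x y hx hy hxy
  rcases lt_or_eq_of_le hxy with hlt | heq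
  · exact le_of_eq (H.v2 x y hx hy hlt).symm
  · by_contra hcon
    push_neg at hcon
    set e := V (x + y) with he
    have hepos : 0 < e := hVpos (x + y) (hpos_add x y hx)
    -- V ((n+1)•x + (n+1)•y) = e for all n
    have key : ∀ n : ℕ, V ((n + 1) • x + (n + 1) • y) = e := by
      intro n
      induction n with
      | zero => simp; exact he.symm
      | succ n ih =>
        have hs : 0 < (n + 1) • x + (n + 1) • y := by
          have : (n + 1) • x + (n + 1) • y = x + (n • x + (n + 1) • y) := by
            rw [succ_nsmul' x n]; abel
          rw [this]; exact hpos_add _ _ hx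
        have h1 : V ((n + 1) • x + (n + 1) • y + x) = e := by
          rw [H.v2 _ x hs hx (ih ▸ hcon)]; exact ih
        have hs2 : 0 < (n + 1) • x + (n + 1) • y + x := hpos_add _ x hs
        have h2 : V ((n + 1) • x + (n + 1) • y + x + y) = e := by
          have hVy : V ((n + 1) • x + (n + 1) • y + x) < V y := by
            rw [h1]; exact lt_of_lt_of_le hcon hxy
          rw [H.v2 _ y hs2 hy hVy]; exact h1
        have : (n + 1 + 1) • x + (n + 1 + 1) • y
            = (n + 1) • x + (n + 1) • y + x + y := by
          rw [succ_nsmul x (n + 1), succ_nsmul y (n + 1)]; abel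
        rw [this, h2]
    -- specialize to n = k - 1, i.e. k • x + k • y
    have hk1 : k - 1 + 1 = k := by omega
    have hK : V (k • x + k • y) = e := by
      have := key (k - 1); rwa [hk1] at this
    have hK2 : V (k • x + k • y) = k • e := by
      rw [← smul_add, H.v1.1 (x + y)]
    have hke : k • e = e := hK2 ▸ hK
    -- hence (k-1) • e = 0, contradicting e > 0
    have h0 : (k - 1) • e = 0 := by
      have : (k - 1) • e + e = 0 + e := by
        rw [zero_add, ← succ_nsmul e (k - 1), hk1, hke]
      exact add_right_cancel this
    have hpos : 0 < (k - 1) • e := by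
      have h2 : k - 1 = k - 2 + 1 := by omega
      rw [h2, succ_nsmul' e (k - 2)]
      exact hpos_add e _ hepos
    rw [h0] at hpos
    exact lt_irrefl _ hpos
end

section
/- Least element principle: let M satisfy the base axioms, let P : M → Prop, and suppose M satisfies the comprehension principle for P. If there exists d with P_k(d) and P(d), then there exists d with P_k(d) and P(d) such that ¬P(d') for every d' < d with P_k(d'). -/
/-- The comprehension principle for a predicate `P` on `M`. -/
def Comprehension {M : Type*} [AddCancelCommMonoid M] [LinearOrder M]
    (V : M → M) (P : M → Prop) : Prop :=
  ∀ d : M, (0 < d ∧ V d = d) → ∃ x < d, ∀ d' < d, (0 < d' ∧ V d' = d') →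
    (DigitEq V x d' 1 ∧ P d') ∨ (DigitEq V x d' 0 ∧ ¬ P d')

/-- Least element principle for powers of `k`. -/
theorem stmt9 (k : ℕ) (hk : 2 ≤ k) (M : Type*) [AddCancelCommMonoid M] [LinearOrder M]
    (one : M) (V : M → M) (H : BuchiAxioms k M one V)
    (P : M → Prop) (hC : Comprehension V P) :
    (∃ d : M, (0 < d ∧ V d = d) ∧ P d) →
      ∃ d : M, (0 < d ∧ V d = d) ∧ P d ∧ ∀ d' < d, (0 < d' ∧ V d' = d') → ¬ P d' := by

  rintro ⟨d₀, hd₀, hPd₀⟩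
  -- basic order facts
  have mono : ∀ a b c : M, a ≤ b → a + c ≤ b + c := fun a b c h => (H.transl a b c).1 h
  have leAddLeft : ∀ a b : M, a ≤ b + a := fun a b => by
    have := mono 0 b a (H.ord0 b); simpa using this
  have leAddRight : ∀ a b : M, a ≤ a + b := fun a b => by
    rw [add_comm]; exact leAddLeft a b
  have ltAdd : ∀ a w : M, 0 < w → a < a + w := by
    intro a w hw
    refine lt_of_not_ge ?_
    intro h
    have h2 : w + a ≤ 0 + a := by rw [zero_add, add_comm w a]; exact h
    exact absurd ((H.transl w 0 a).2 h2) (not_le.2 hw)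
  have nsmul_ge : ∀ (a : ℕ) (v : M), 1 ≤ a → v ≤ a • v := by
    intro a v ha
    obtain ⟨b, rfl⟩ := Nat.exists_eq_add_of_le ha
    rw [add_nsmul, one_nsmul]
    exact leAddRight v (b • v)
  have Vle : ∀ y : M, 0 < y → V y ≤ y := by
    intro y hy
    obtain ⟨y', _, a, ha1, _, heq, _⟩ := H.v3 y hy
    calc V y ≤ a • V y := nsmul_ge a (V y) ha1
      _ ≤ y' + a • V y := leAddLeft _ _
      _ = y := heq.symm
  have Vpos : ∀ x : M, 0 < x → 0 < V x := by
    intro x hx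
    rcases (H.ord0 (V x)).lt_or_eq with h | h
    · exact h
    · exfalso
      obtain ⟨y, _, a, _, _, heq, hor⟩ := H.v3 x hx
      rw [← h, smul_zero, add_zero] at heq
      rcases hor with hlt | rfl
      · rw [heq] at hlt; exact lt_irrefl _ hlt
      · rw [heq] at hx; exact lt_irrefl _ hx
  -- D := k • d₀ is a power position above d₀
  have hkd : d₀ < k • d₀ := by
    have hk1 : k = 1 + (k - 1) := by omega
    rw [hk1, add_nsmul, one_nsmul]
    refine ltAdd d₀ _ (lt_of_lt_of_le hd₀.1 (nsmul_ge (k-1) d₀ (by omega)))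
  have hDpos : 0 < k • d₀ := lt_trans hd₀.1 hkd
  have hDpk : (0 : M) < k • d₀ ∧ V (k • d₀) = k • d₀ := by
    refine ⟨hDpos, ?_⟩
    rw [H.v1.1, hd₀.2]
  obtain ⟨x, hxD, hdich⟩ := hC (k • d₀) hDpk
  -- x is positive since digit of x at d₀ is 1
  have hx : 0 < x := by
    rcases hdich d₀ hkd hd₀ with ⟨⟨_, y, hy, z, hz, heq, _⟩, _⟩ | ⟨_, hnp⟩
    · rw [one_nsmul] at heq
      have : d₀ ≤ x := by
        rw [heq]
        exact le_trans (leAddLeft d₀ y) (leAddRight _ z)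
      exact lt_of_lt_of_le hd₀.1 this
    · exact absurd hPd₀ hnp
  set d := V x with hdDef
  have hdpk : (0 : M) < d ∧ V d = d := ⟨Vpos x hx, H.v5 x⟩
  have hdlex : d ≤ x := Vle x hx
  have hdD : d < k • d₀ := lt_of_le_of_lt hdlex hxD
  -- the digit of x at d = V x is not zero
  have hnz : ¬ DigitEq V x d 0 := by
    rintro ⟨_, y, hy, z, _, heq, hor⟩
    rw [zero_nsmul, add_zero] at heq
    rcases hor with rfl | hvz
    · rw [add_zero] at heq
      have h1 : x < d := by rw [heq]; exact hy
      exact absurd h1 (not_lt.2 hdlex)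
    · have hz0 : 0 < z := by
        rcases (H.ord0 z).lt_or_eq with h | h
        · exact h
        · rw [← h, H.v0.1] at hvz
          exact absurd hvz (not_lt.2 (H.ord0 d))
      rcases (H.ord0 y).lt_or_eq with hy0 | hy0
      · have hVy : V y < V z := lt_trans (lt_of_le_of_lt (Vle y hy0) hy) hvz
        have h2 := H.v2 y z hy0 hz0 hVy
        rw [← heq] at h2
        have h3 : d ≤ y := by rw [hdDef, h2]; exact Vle y hy0
        exact absurd hy (not_lt.2 h3)
      · rw [← hy0, zero_add] at heq
        rw [← heq, ← hdDef] at hvz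
        exact lt_irrefl _ hvz
  -- if the digit of x at some power d' is 1, then V x ≤ d'
  have hdig1 : ∀ d' : M, (0 < d' ∧ V d' = d') → DigitEq V x d' 1 → V x ≤ d' := by
    rintro d' hd' ⟨_, y, hy, z, _, heq, hor⟩
    rw [one_nsmul] at heq
    have hwpos : 0 < y + d' := lt_of_lt_of_le hd'.1 (leAddLeft d' y)
    have hVw : V (y + d') ≤ d' := by
      rcases (H.ord0 y).lt_or_eq with hy0 | hy0
      · have : V y < V d' := by rw [hd'.2]; exact lt_of_le_of_lt (Vle y hy0) hy
        rw [H.v2 y d' hy0 hd'.1 this]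
        exact le_trans (Vle y hy0) (le_of_lt hy)
      · rw [← hy0, zero_add, hd'.2]
    rcases hor with rfl | hvz
    · rw [add_zero] at heq
      rw [heq]; exact hVw
    · have hz0 : 0 < z := by
        rcases (H.ord0 z).lt_or_eq with h | h
        · exact h
        · rw [← h, H.v0.1] at hvz
          exact absurd hvz (not_lt.2 (H.ord0 d'))
      have : V (y + d') < V z := lt_of_le_of_lt hVw hvz
      have h2 := H.v2 (y + d') z hwpos hz0 this
      rw [← heq] at h2
      rw [h2]; exact hVw
  -- P holds at d
  have hPd : P d := by
    rcases hdich d hdD hdpk with ⟨_, hp⟩ | ⟨h0, _⟩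
    · exact hp
    · exact absurd h0 hnz
  refine ⟨d, hdpk, hPd, ?_⟩
  intro d' hd'd hd' hPd'
  have hd'D : d' < k • d₀ := lt_trans hd'd hdD
  rcases hdich d' hd'D hd' with ⟨h1, _⟩ | ⟨_, hnp⟩
  · have := hdig1 d' hd' h1
    exact absurd hd'd (not_lt.2 this)
  · exact hnp hPd'
end

section
/- Induction principle for powers of k: let M satisfy the base axioms, let P : M → Prop, and suppose M satisfies the comprehension principle for the predicate d ↦ ¬P(d). If P(1) holds and, for every d with P_k(d), P(d) implies P(k•d), then P(d) holds for every d with P_k(d). -/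
namespace BuchiAxioms
variable {k : ℕ} {M : Type*} [AddCancelCommMonoid M] [LinearOrder M] {one : M} {V : M → M}
variable (H : BuchiAxioms k M one V)
include H

lemma add_le_add_r {x y : M} (z : M) (h : x ≤ y) : x + z ≤ y + z := (H.transl x y z).1 h

lemma add_lt_add_r {x y : M} (z : M) (h : x < y) : x + z < y + z := by
  rcases lt_or_ge (x + z) (y + z) with h' | h'
  · exact h'
  · exact absurd ((H.transl y x z).2 h') (not_le_of_gt h)

lemma le_self_add' (x y : M) : x ≤ x + y := by
  have := H.add_le_add_r x (H.ord0 y)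
  rwa [zero_add, add_comm] at this

lemma add_le_add' {a b c d : M} (h1 : a ≤ b) (h2 : c ≤ d) : a + c ≤ b + d :=
  le_trans (H.add_le_add_r c h1)
    (by rw [add_comm b c, add_comm b d]; exact H.add_le_add_r b h2)

lemma add_lt_add_of_lt_of_le' {a b c d : M} (h1 : a < b) (h2 : c ≤ d) : a + c < b + d :=
  lt_of_lt_of_le (H.add_lt_add_r c h1)
    (by rw [add_comm b c, add_comm b d]; exact H.add_le_add_r b h2)

lemma lt_add_of_pos_right' (a : M) {c : M} (hc : 0 < c) : a < a + c := by
  have := H.add_lt_add_r a hc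
  rwa [zero_add, add_comm] at this

lemma nsmul_le_nsmul_x (n : ℕ) {x y : M} (h : x ≤ y) : n • x ≤ n • y := by
  induction n with
  | zero => simp
  | succ n ih => rw [succ_nsmul, succ_nsmul]; exact H.add_le_add' ih h

lemma nsmul_lt_nsmul_x {n : ℕ} (hn : 1 ≤ n) {x y : M} (h : x < y) : n • x < n • y := by
  obtain ⟨m, rfl⟩ : ∃ m, n = m + 1 := ⟨n - 1, by omega⟩
  rw [succ_nsmul, succ_nsmul, add_comm (m • x) x, add_comm (m • y) y]
  exact H.add_lt_add_of_lt_of_le' h (H.nsmul_le_nsmul_x m (le_of_lt h))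

lemma nsmul_pos' {n : ℕ} (hn : 1 ≤ n) {x : M} (hx : 0 < x) : 0 < n • x := by
  have := H.nsmul_lt_nsmul_x hn hx
  rwa [smul_zero] at this

lemma nsmul_le_nsmul_n {n m : ℕ} (h : n ≤ m) (x : M) : n • x ≤ m • x := by
  obtain ⟨j, rfl⟩ : ∃ j, m = n + j := ⟨m - n, by omega⟩
  rw [add_nsmul]; exact H.le_self_add' _ _

lemma nsmul_lt_nsmul_n {n m : ℕ} (h : n < m) {x : M} (hx : 0 < x) : n • x < m • x := by
  obtain ⟨j, rfl⟩ : ∃ j, m = n + (j + 1) := ⟨m - n - 1, by omega⟩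
  rw [add_nsmul]
  exact H.lt_add_of_pos_right' _ (H.nsmul_pos' (by omega) hx)

lemma nsmul_inj {n : ℕ} (hn : 1 ≤ n) {x y : M} (h : n • x = n • y) : x = y := by
  rcases lt_trichotomy x y with hlt | he | hlt
  · exact absurd h (ne_of_lt (H.nsmul_lt_nsmul_x hn hlt))
  · exact he
  · exact absurd h.symm (ne_of_lt (H.nsmul_lt_nsmul_x hn hlt))

lemma V_le_self (x : M) : V x ≤ x := by
  rcases (H.ord0 x).eq_or_lt with h | h
  · rw [← h, H.v0.1]
  · obtain ⟨y, _, a, ha1, _, hxe, _⟩ := H.v3 x h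
    calc V x = 1 • V x := (one_nsmul _).symm
      _ ≤ a • V x := H.nsmul_le_nsmul_n ha1 _
      _ ≤ a • V x + y := H.le_self_add' _ _
      _ = y + a • V x := add_comm _ _
      _ = x := hxe.symm

lemma V_pos {x : M} (hx : 0 < x) : 0 < V x := by
  rcases (H.ord0 (V x)).eq_or_lt with h | h
  · obtain ⟨y, _, a, _, _, hxe, hdisj⟩ := H.v3 x hx
    rw [← h, smul_zero, add_zero] at hxe
    rcases hdisj with hlt | rfl
    · rw [← hxe] at hlt; exact absurd hlt (lt_irrefl _)
    · rw [hxe] at hx; exact absurd hx (lt_irrefl _)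
  · exact h

lemma one_le_of_pos {x : M} (hx : 0 < x) : one ≤ x := by
  have := H.discrete 0 x hx; rwa [zero_add] at this

lemma pos_of_ne {z : M} (hz : z ≠ 0) : 0 < z := (H.ord0 z).lt_of_ne (Ne.symm hz)

/-- The digit of `x` at position `V x` is not `0`. -/
lemma not_digitEq_zero_self {x : M} (hx : 0 < x) : ¬ DigitEq V x (V x) 0 := by
  rintro ⟨-, y, hy, z, hz, hrep, hdisj⟩
  rw [zero_nsmul, add_zero] at hrep
  rcases hdisj with rfl | hVz
  · rw [add_zero] at hrep
    rw [hrep] at hy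
    exact absurd (lt_of_lt_of_le hy (H.V_le_self y)) (lt_irrefl _)
  · have hzpos : 0 < z := by
      apply H.pos_of_ne
      rintro rfl
      rw [H.v0.1] at hVz
      exact absurd (lt_of_le_of_lt (H.ord0 (V x)) hVz) (lt_irrefl _)
    rcases (H.ord0 y).eq_or_lt with h0 | h0
    · rw [← h0, zero_add] at hrep
      rw [← hrep] at hVz
      exact absurd hVz (lt_irrefl _)
    · have hVylt : V y < V z :=
        lt_of_le_of_lt (le_trans (H.V_le_self y) (le_of_lt hy)) hVz
      have hv2 := H.v2 y z h0 hzpos hVylt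
      rw [← hrep] at hv2
      have : V x < V x :=
        lt_of_le_of_lt (le_of_eq hv2) (lt_of_le_of_lt (H.V_le_self y) hy)
      exact absurd this (lt_irrefl _)

/-- Below `V x`, every digit of `x` is not `1`. -/
lemma not_digitEq_one_below {x d' : M} (hd' : 0 < d' ∧ V d' = d') (h : d' < V x) :
    ¬ DigitEq V x d' 1 := by
  rintro ⟨-, y, hy, z, hz, hrep, hdisj⟩
  rw [one_nsmul] at hrep
  rcases hdisj with rfl | hVz
  · rw [add_zero] at hrep
    rcases (H.ord0 y).eq_or_lt with h0 | h0
    · rw [← h0, zero_add] at hrep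
      rw [hrep, hd'.2] at h
      exact absurd h (lt_irrefl _)
    · have hVylt : V y < V d' := by
        rw [hd'.2]; exact lt_of_le_of_lt (H.V_le_self y) hy
      have hv2 := H.v2 y d' h0 hd'.1 hVylt
      rw [← hrep] at hv2
      have : V x < V x :=
        lt_of_le_of_lt (le_of_eq hv2)
          (lt_trans (lt_of_le_of_lt (H.V_le_self y) hy) h)
      exact absurd this (lt_irrefl _)
  · have hzpos : 0 < z := by
      apply H.pos_of_ne
      rintro rfl
      rw [H.v0.1] at hVz
      exact absurd (lt_of_le_of_lt (H.ord0 d') hVz) (lt_irrefl _)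
    have hVdz : V (d' + z) = d' := by
      have := H.v2 d' z hd'.1 hzpos (by rw [hd'.2]; exact hVz)
      rw [hd'.2] at this; exact this
    have hdzpos : 0 < d' + z := lt_of_lt_of_le hd'.1 (H.le_self_add' _ _)
    rw [add_assoc] at hrep
    rcases (H.ord0 y).eq_or_lt with h0 | h0
    · rw [← h0, zero_add] at hrep
      rw [hrep, hVdz] at h
      exact absurd h (lt_irrefl _)
    · have hVylt : V y < V (d' + z) := by
        rw [hVdz]; exact lt_of_le_of_lt (H.V_le_self y) hy
      have hv2 := H.v2 y (d' + z) h0 hdzpos hVylt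
      rw [← hrep] at hv2
      have : V x < V x :=
        lt_of_le_of_lt (le_of_eq hv2)
          (lt_trans (lt_of_le_of_lt (H.V_le_self y) hy) h)
      exact absurd this (lt_irrefl _)

/-- Descent: there is no minimal bad power. -/
lemma descent (hk : 2 ≤ k) {P : M → Prop} (h1 : P one)
    (hstep : ∀ d : M, (0 < d ∧ V d = d) → P d → P (k • d))
    {e : M} (he : 0 < e ∧ V e = e) (hPe : ¬ P e)
    (hsmall : ∀ d', d' < e → (0 < d' ∧ V d' = d') → P d') : False := by
  have h1e : one < e := by
    rcases (H.one_le_of_pos he.1).eq_or_lt with h | h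
    · exact absurd (h ▸ h1) hPe
    · exact h
  obtain ⟨a, hak, z, hcase⟩ := H.mod e
  have key_a_pos : ∀ b : ℕ, 1 ≤ b → b < k → ¬ (e = b • one) := by
    intro b hb1 hbk habs
    have hVb : V (b • one) = one := H.v1.2 one b ⟨H.one_pos, H.v0.2⟩ hb1 hbk
    have : e = one := by rw [← he.2, habs, hVb]
    exact absurd this (ne_of_gt h1e)
  rcases hcase with h | h
  · rcases Nat.eq_zero_or_pos a with rfl | ha
    · rw [zero_nsmul, zero_add] at h
      have hzpos : 0 < z := by
        apply H.pos_of_ne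
        rintro rfl
        rw [smul_zero] at h
        exact absurd h (ne_of_gt he.1)
      have hVz : V z = z := by
        apply H.nsmul_inj (n := k) (by omega)
        rw [← H.v1.1 z, ← h, he.2, h]
      have hzlt : z < e := by
        rw [h]
        calc z = 1 • z := (one_nsmul _).symm
          _ < k • z := H.nsmul_lt_nsmul_n (by omega) hzpos
      have := hstep z ⟨hzpos, hVz⟩ (hsmall z hzlt ⟨hzpos, hVz⟩)
      rw [← h] at this
      exact hPe this
    · have hVa : V (a • one) = one := H.v1.2 one a ⟨H.one_pos, H.v0.2⟩ ha hak
      rcases (H.ord0 z).eq_or_lt with h0 | hzpos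
      · rw [← h0, smul_zero, add_zero] at h
        exact key_a_pos a ha hak h
      · have hVkz : one < V (k • z) := by
          rw [H.v1.1]
          calc one ≤ V z := H.one_le_of_pos (H.V_pos hzpos)
            _ = 1 • V z := (one_nsmul _).symm
            _ < k • V z := H.nsmul_lt_nsmul_n (by omega) (H.V_pos hzpos)
        have hapos : 0 < a • one := H.nsmul_pos' ha H.one_pos
        have hkzpos : 0 < k • z := H.nsmul_pos' (by omega) hzpos
        have hv2 := H.v2 _ _ hapos hkzpos (by rw [hVa]; exact hVkz)
        rw [← h, he.2, hVa] at hv2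
        exact absurd hv2 (ne_of_gt h1e)
  · rcases (H.ord0 z).eq_or_lt with h0 | hzpos
    · rw [← h0, smul_zero, add_zero] at h
      rcases Nat.eq_zero_or_pos a with rfl | ha
      · rw [zero_nsmul] at h
        exact absurd h.symm (ne_of_gt he.1)
      · exact key_a_pos a ha hak h.symm
    · have h2 : a • one < k • one := H.nsmul_lt_nsmul_n hak H.one_pos
      have h3 : k • one ≤ k • z := H.nsmul_le_nsmul_x k (H.one_le_of_pos hzpos)
      have h4 : k • z < e + k • z := by
        have := H.add_lt_add_r (k • z) he.1
        rwa [zero_add] at this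
      rw [← h] at h4
      exact absurd (lt_trans (lt_of_le_of_lt h3 h4) h2) (lt_irrefl _)

end BuchiAxioms

/-- Induction principle for powers of `k`. -/
theorem stmt10 (k : ℕ) (hk : 2 ≤ k) (M : Type*) [AddCancelCommMonoid M] [LinearOrder M]
    (one : M) (V : M → M) (H : BuchiAxioms k M one V)
    (P : M → Prop) (hC : Comprehension V (fun d => ¬ P d))
    (h1 : P one) (hstep : ∀ d : M, (0 < d ∧ V d = d) → P d → P (k • d)) :
    ∀ d : M, (0 < d ∧ V d = d) → P d := by
  intro d hd
  by_contra hPd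
  have hkd : (0 : M) < k • d ∧ V (k • d) = k • d := by
    constructor
    · exact H.nsmul_pos' (by omega) hd.1
    · rw [H.v1.1, hd.2]
  obtain ⟨x, hx_lt, hx⟩ := hC (k • d) hkd
  have hdlt : d < k • d := by
    calc d = 1 • d := (one_nsmul _).symm
      _ < k • d := H.nsmul_lt_nsmul_n (by omega) hd.1
  have hdig1 : DigitEq V x d 1 := by
    rcases hx d hdlt hd with ⟨hdig, _⟩ | ⟨_, hnn⟩
    · exact hdig
    · exact absurd hPd hnn
  have hxpos : 0 < x := by
    obtain ⟨-, y, hy, z, hz, hrep, -⟩ := hdig1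
    rw [one_nsmul] at hrep
    calc (0 : M) < d := hd.1
      _ ≤ y + d := by rw [add_comm]; exact H.le_self_add' _ _
      _ ≤ y + d + z := H.le_self_add' _ _
      _ = x := hrep.symm
  have hepos : 0 < V x := H.V_pos hxpos
  have hVe : V (V x) = V x := H.v5 x
  have he_le : V x ≤ x := H.V_le_self x
  have he_lt : V x < k • d := lt_of_le_of_lt he_le hx_lt
  have hPe : ¬ P (V x) := by
    rcases hx (V x) he_lt ⟨hepos, hVe⟩ with ⟨_, hnP⟩ | ⟨hdig0, _⟩
    · exact hnP
    · exact absurd hdig0 (H.not_digitEq_zero_self hxpos)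
  have hsmall : ∀ d', d' < V x → (0 < d' ∧ V d' = d') → P d' := by
    intro d' hd'e hd'
    have hd'lt : d' < k • d := lt_trans (lt_of_lt_of_le hd'e he_le) hx_lt
    rcases hx d' hd'lt hd' with ⟨hdig, _⟩ | ⟨_, hnn⟩
    · exact absurd hdig (H.not_digitEq_one_below hd' hd'e)
    · exact not_not.mp hnn
  exact H.descent hk h1 hstep ⟨hepos, hVe⟩ hPe hsmall
end

section
/- Let A = (Q, q₀, F, Δ) be a finite automaton over Σ_k^m, and let det(A) be its determinization: the automaton over Σ_k^m whose states are the subsets H ⊆ Q, with initial state {q₀} and transitions (H, a⃗, H') exactly when H' = {q' ∈ Q : ∃ q ∈ H, (q, a⃗, q') ∈ Δ}. Then for all x⃗ ∈ ℕ^m, n ∈ ℕ and q ∈ Q: W_{A,q}(x⃗, n) holds if and only if there exists a subset H ⊆ Q with q ∈ H and W_{det(A),H}(x⃗, n). -/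
/-- The `i`-th base-`k` digit of `x`. -/
def digit (k x i : ℕ) : ℕ := x / k ^ i % k

/-- A finite automaton over the alphabet `Σ_k^m = (Fin k)^m`. -/
structure FA (k m : ℕ) where
  Q : Type
  fin : Finite Q
  q0 : Q
  acc : Set Q
  δ : Set (Q × (Fin m → Fin k) × Q)

/-- The run predicate `W_{A,q₁}(x⃗, n)`: the automaton `A` can reach state `q₁`
after reading the first `n` base-`k` digits of `x⃗`, the run being encoded by a
family `(w_q)` of natural numbers. -/
def FA.W {k m : ℕ} (A : FA k m) (q1 : A.Q) (x : Fin m → ℕ) (n : ℕ) : Prop :=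
  ∃ w : A.Q → ℕ,
    (∀ q, w q < k ^ (n + 1)) ∧
    (∀ i ≤ n, ∃ q, digit k (w q) i = 1 ∧ ∀ q' ≠ q, digit k (w q') i = 0) ∧
    digit k (w A.q0) 0 = 1 ∧ digit k (w q1) n = 1 ∧
    ∀ i < n, ∀ q, digit k (w q) i = 1 →
      ∃ a : Fin m → Fin k, ∃ q', (q, a, q') ∈ A.δ ∧ digit k (w q') (i + 1) = 1 ∧
        ∀ j, digit k (x j) i = (a j : ℕ)

/-- The determinization of `A`: states are subsets of `A.Q`, initial state
`{q₀}`, and `(H, a⃗, H')` is a transition exactly when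
`H' = {q' | ∃ q ∈ H, (q, a⃗, q') ∈ Δ}`. -/
def FA.det {k m : ℕ} (A : FA k m) : FA k m where
  Q := Set A.Q
  fin := by have := A.fin; infer_instance
  q0 := {A.q0}
  acc := {H | ∃ q ∈ H, q ∈ A.acc}
  δ := {t | t.2.2 = {q' | ∃ q ∈ t.1, (q, t.2.1, q') ∈ A.δ}}

lemma digit_succ (k x i : ℕ) : digit k x (i+1) = digit k (x/k) i := by
  unfold digit
  rw [Nat.div_div_eq_div_mul, ← pow_succ']

lemma digit_sum {k : ℕ} (hk : 0 < k) :
    ∀ (j : ℕ) (c : ℕ → ℕ), (∀ i, c i < k) → ∀ N,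
      digit k (∑ i ∈ Finset.range N, c i * k ^ i) j = if j < N then c j else 0 := by
  intro j
  induction j with
  | zero =>
    intro c hc N
    cases N with
    | zero => simp [digit]
    | succ m =>
      rw [Finset.sum_range_succ']
      have h1 : ∑ i ∈ Finset.range m, c (i+1) * k ^ (i+1)
          = k * ∑ i ∈ Finset.range m, c (i+1) * k ^ i := by
        rw [Finset.mul_sum]; apply Finset.sum_congr rfl; intro i _; ring
      rw [h1]
      unfold digit
      simp [Nat.mul_add_mod, Nat.mod_eq_of_lt (hc 0)]
  | succ j ih =>
    intro c hc N
    cases N with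
    | zero => simp [digit]
    | succ m =>
      rw [Finset.sum_range_succ', digit_succ]
      have h1 : ∑ i ∈ Finset.range m, c (i+1) * k ^ (i+1)
          = k * ∑ i ∈ Finset.range m, c (i+1) * k ^ i := by
        rw [Finset.mul_sum]; apply Finset.sum_congr rfl; intro i _; ring
      have h2 : (k * (∑ i ∈ Finset.range m, c (i+1) * k ^ i) + c 0 * k ^ 0) / k
          = ∑ i ∈ Finset.range m, c (i+1) * k ^ i := by
        rw [pow_zero, mul_one, Nat.mul_add_div hk, Nat.div_eq_of_lt (hc 0), add_zero]
      rw [h1, h2, ih (fun i => c (i+1)) (fun i => hc (i+1)) m]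
      by_cases h : j < m <;> simp [h]

lemma sum_pow_lt {k : ℕ} (hk : 0 < k) (c : ℕ → ℕ) (hc : ∀ i, c i < k) :
    ∀ N, ∑ i ∈ Finset.range N, c i * k ^ i < k ^ N := by
  intro N
  induction N with
  | zero => simp
  | succ m ih =>
    obtain ⟨k', rfl⟩ : ∃ k', k = k' + 1 := ⟨k - 1, by omega⟩
    rw [Finset.sum_range_succ, pow_succ]
    have h1 : c m ≤ k' := by have := hc m; omega
    have h2 : c m * (k'+1)^m ≤ k' * (k'+1)^m := Nat.mul_le_mul_right _ h1
    nlinarith [ih, h2]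

/-- A run of `A` as an explicit sequence of states. -/
def PathP {k m : ℕ} (A : FA k m) (q1 : A.Q) (x : Fin m → ℕ) (n : ℕ) : Prop :=
  ∃ s : ℕ → A.Q, s 0 = A.q0 ∧ s n = q1 ∧
    ∀ i < n, ∃ a : Fin m → Fin k, (s i, a, s (i+1)) ∈ A.δ ∧
      ∀ j, digit k (x j) i = (a j : ℕ)

lemma W_iff_path {k m : ℕ} (hk : 2 ≤ k) (A : FA k m) (q1 : A.Q)
    (x : Fin m → ℕ) (n : ℕ) : A.W q1 x n ↔ PathP A q1 x n := by
  constructor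
  · rintro ⟨w, _hb, h2, h30, h3n, h4⟩
    classical
    choose f hf1 hf2 using h2
    refine ⟨fun i => if h : i ≤ n then f i h else A.q0, ?_, ?_, ?_⟩
    · simp only [Nat.zero_le, dif_pos]
      by_contra hne
      have := hf2 0 (Nat.zero_le n) A.q0 (fun h => hne h.symm)
      exact absurd h30 (by rw [this]; omega)
    · simp only [le_refl, dif_pos]
      by_contra hne
      have := hf2 n le_rfl q1 (fun h => hne h.symm)
      exact absurd h3n (by rw [this]; omega)
    · intro i hi
      have hi' : i ≤ n := le_of_lt hi
      have hi1 : i + 1 ≤ n := hi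
      simp only [dif_pos hi', dif_pos hi1]
      obtain ⟨a, q', htr, hd, hx⟩ := h4 i hi (f i hi') (hf1 i hi')
      have hq' : q' = f (i+1) hi1 := by
        by_contra hne
        have := hf2 (i+1) hi1 q' hne
        omega
      exact ⟨a, hq' ▸ htr, hx⟩
  · rintro ⟨s, hs0, hsn, hst⟩
    classical
    set c : A.Q → ℕ → ℕ := fun q i => if s i = q then 1 else 0 with hc
    have hclt : ∀ q i, c q i < k := by intro q i; simp only [hc]; split <;> omega
    set w : A.Q → ℕ := fun q => ∑ i ∈ Finset.range (n+1), c q i * k ^ i with hw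
    have hd : ∀ q i, digit k (w q) i = if i < n + 1 then c q i else 0 := by
      intro q i
      exact digit_sum (by omega) i (c q) (hclt q) (n+1)
    refine ⟨w, ?_, ?_, ?_, ?_, ?_⟩
    · intro q; exact sum_pow_lt (by omega) _ (hclt q) (n+1)
    · intro i hi
      refine ⟨s i, ?_, ?_⟩
      · rw [hd]; simp [hc, Nat.lt_succ_of_le hi]
      · intro q' hq'; rw [hd]; simp [hc, Nat.lt_succ_of_le hi, hq'.symm]
    · rw [hd]; simp [hc, hs0]
    · rw [hd]; simp [hc, hsn, Nat.lt_succ_self]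
    · intro i hi q hq
      have hqs : s i = q := by
        rw [hd] at hq
        by_contra hne
        simp [hc, hne, Nat.lt_succ_of_le (le_of_lt hi)] at hq
      obtain ⟨a, htr, hx⟩ := hst i hi
      refine ⟨a, s (i+1), hqs ▸ htr, ?_, hx⟩
      rw [hd]; simp [hc, Nat.succ_lt_succ hi]

/-- The canonical letter read at position `i`. -/
def canA {k : ℕ} (m : ℕ) (hk : 0 < k) (x : Fin m → ℕ) (i : ℕ) : Fin m → Fin k :=
  fun j => ⟨digit k (x j) i, Nat.mod_lt _ hk⟩

lemma canA_eq {k m : ℕ} (hk : 0 < k) (x : Fin m → ℕ) (i : ℕ) (a : Fin m → Fin k)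
    (h : ∀ j, digit k (x j) i = (a j : ℕ)) : a = canA m hk x i := by
  funext j
  exact Fin.ext (h j).symm

/-- The deterministic run of `det(A)` on `x`. -/
def detRun {k m : ℕ} (hk : 0 < k) (A : FA k m) (x : Fin m → ℕ) : ℕ → Set A.Q
  | 0 => {A.q0}
  | (i+1) => {q' | ∃ q ∈ detRun hk A x i, (q, canA m hk x i, q') ∈ A.δ}

lemma mem_detRun {k m : ℕ} (hk : 0 < k) (A : FA k m) (x : Fin m → ℕ) :
    ∀ n (q : A.Q), q ∈ detRun hk A x n ↔ PathP A q x n := by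
  intro n
  induction n with
  | zero =>
    intro q
    constructor
    · intro hq
      exact ⟨fun _ => A.q0, rfl, hq.symm, fun i hi => absurd hi (Nat.not_lt_zero i)⟩
    · rintro ⟨s, hs0, hsn, _⟩
      rw [← hsn, hs0]; rfl
  | succ n ih =>
    intro q'
    constructor
    · rintro ⟨q, hq, htr⟩
      obtain ⟨s, hs0, hsn, hst⟩ := (ih q).1 hq
      refine ⟨fun i => if i ≤ n then s i else q', by simp [hs0], by simp, ?_⟩
      intro i hi
      rcases Nat.lt_or_ge i n with h | h
      · obtain ⟨a, ha, hx⟩ := hst i h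
        refine ⟨a, ?_, hx⟩
        simp only [le_of_lt h, if_pos, Nat.succ_le_of_lt h]
        simpa [le_of_lt h, Nat.succ_le_of_lt h] using ha
      · have hin : i = n := by omega
        subst hin
        refine ⟨canA m hk x i, ?_, fun j => rfl⟩
        simpa [hsn] using htr
    · rintro ⟨s, hs0, hsn, hst⟩
      obtain ⟨a, htr, hx⟩ := hst n (Nat.lt_succ_self n)
      have ha : a = canA m hk x n := canA_eq hk x n a hx
      refine ⟨s n, (ih (s n)).2 ⟨s, hs0, rfl, fun i hi => hst i (Nat.lt_succ_of_lt hi)⟩, ?_⟩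
      rw [← ha, hsn] at *
      exact hsn ▸ htr

lemma det_path_detRun {k m : ℕ} (hk : 0 < k) (A : FA k m) (x : Fin m → ℕ) (n : ℕ) :
    PathP A.det (detRun hk A x n) x n := by
  refine ⟨detRun hk A x, rfl, rfl, ?_⟩
  intro i _
  exact ⟨canA m hk x i, rfl, fun j => rfl⟩

lemma det_path_unique {k m : ℕ} (hk : 0 < k) (A : FA k m) (x : Fin m → ℕ) (n : ℕ)
    (H : Set A.Q) (h : PathP A.det H x n) : H = detRun hk A x n := by
  obtain ⟨s, hs0, hsn, hst⟩ := h
  have key : ∀ i ≤ n, s i = detRun hk A x i := by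
    intro i
    induction i with
    | zero => intro _; exact hs0
    | succ i ih =>
      intro hi
      obtain ⟨a, htr, hx⟩ := hst i (Nat.lt_of_succ_le hi)
      have ha : a = canA m hk x i := canA_eq hk x i a hx
      simp only [FA.det, Set.mem_setOf_eq] at htr
      rw [ha, ih (le_of_lt (Nat.lt_of_succ_le hi))] at htr
      rw [show s (i + 1) = {q' | ∃ q ∈ detRun hk A x i, (q, canA m hk x i, q') ∈ A.δ} from htr]
      rfl
  rw [← hsn]
  exact key n le_rfl

/-- `W_{A,q}(x⃗,n)` iff `W_{det(A),H}(x⃗,n)` for some subset `H ∋ q`. -/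
theorem stmt12 (k m : ℕ) (hk : 2 ≤ k) (hm : 1 ≤ m) (A : FA k m) :
    ∀ (x : Fin m → ℕ) (n : ℕ) (q : A.Q),
      A.W q x n ↔ ∃ H : Set A.Q, q ∈ H ∧ A.det.W H x n := by
  intro x n q
  have hk0 : 0 < k := by omega
  rw [W_iff_path hk]
  constructor
  · intro hp
    exact ⟨detRun hk0 A x n, (mem_detRun hk0 A x n q).2 hp,
      (W_iff_path hk A.det _ x n).2 (det_path_detRun hk0 A x n)⟩
  · rintro ⟨H, hqH, hW⟩
    have hH := det_path_unique hk0 A x n H ((W_iff_path hk A.det H x n).1 hW)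
    exact (mem_detRun hk0 A x n q).1 (hH ▸ hqH)
end
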